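/- arXiv:2509.05968 — 5 statements merged into one kernel-verified Lean document; each statement's English description precedes it below -/
import Mathlib

section
/- Let Q, k, c′, r be positive integers with gcd(c′, Q) = 1, let χ be a Dirichlet character modulo Q, and set c = Q^k · c′. Then ∑_{d ∈ (ℤ/cℤ)^×} χ(d)·e(d·r/c) = χ(c′) · ( ∑_{d ∈ (ℤ/Q^k ℤ)^×} χ(d)·e(d·r/Q^k) ) · ( ∑_{d | gcd(c′, r)} μ(c′/d)·d ), where in each character sum χ(d) denotes χ evaluated at the reduction of d modulo Q, and the last sum runs over the positive divisors d of gcd(c′, r). -/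
open Complex Finset ArithmeticFunction

noncomputable def eterm (r N j : ℕ) : ℂ :=
  Complex.exp (2 * Real.pi * Complex.I * (((j : ℝ) * r / N : ℝ) : ℂ))


lemma eterm_add (r N j₁ j₂ : ℕ) : eterm r N (j₁ + j₂) = eterm r N j₁ * eterm r N j₂ := by
  rw [eterm, eterm, eterm, ← Complex.exp_add]
  congr 1
  push_cast
  ring

lemma eterm_nat_mul_self (r N t : ℕ) : eterm r N (N * t) = 1 := by
  rcases eq_or_ne N 0 with rfl | hN
  · simp [eterm]
  · rw [eterm]
    have : (((N * t : ℕ) : ℝ) * r / N : ℝ) = ((t * r : ℕ) : ℝ) := by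
      push_cast
      field_simp
    rw [this]
    simpa [mul_comm] using Complex.exp_nat_mul_two_pi_mul_I (t * r)

lemma eterm_mod (r N j : ℕ) : eterm r N (j % N) = eterm r N j := by
  conv_rhs => rw [show j = N * (j / N) + j % N from (Nat.div_add_mod j N).symm]
  rw [eterm_add, eterm_nat_mul_self, one_mul]

lemma eterm_congr (r : ℕ) {N j₁ j₂ : ℕ} (h : (j₁ : ZMod N) = (j₂ : ZMod N)) :
    eterm r N j₁ = eterm r N j₂ := by
  rw [← eterm_mod r N j₁, ← eterm_mod r N j₂]
  rw [ZMod.natCast_eq_natCast_iff] at h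
  rw [h]

lemma eterm_mul_right (r : ℕ) {n : ℕ} (hn : n ≠ 0) (m j : ℕ) :
    eterm r (m * n) (j * n) = eterm r m j := by
  rcases eq_or_ne m 0 with rfl | hm
  · simp [eterm]
  · rw [eterm, eterm]
    congr 2
    have hm' : (m:ℂ) ≠ 0 := Nat.cast_ne_zero.mpr hm
    have hn' : (n:ℂ) ≠ 0 := Nat.cast_ne_zero.mpr hn
    push_cast
    rw [mul_comm (m:ℂ) (n:ℂ), ← div_div, mul_right_comm, mul_div_cancel_right₀ _ hn']

lemma sum_eterm_range (r : ℕ) {q : ℕ} (hq : q ≠ 0) :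
    ∑ j ∈ Finset.range q, eterm r q j = if q ∣ r then (q : ℂ) else 0 := by
  have hq' : (q:ℂ) ≠ 0 := Nat.cast_ne_zero.mpr hq
  set z : ℂ := Complex.exp (2 * Real.pi * Complex.I * ((r:ℂ) / q)) with hzdef
  have hz : ∀ j : ℕ, eterm r q j = z ^ j := by
    intro j
    rw [eterm, hzdef, ← Complex.exp_nat_mul]
    congr 1
    push_cast
    ring
  have hzq : z ^ q = 1 := by
    rw [hzdef, ← Complex.exp_nat_mul]
    have h2 : (q:ℂ) * (2 * Real.pi * Complex.I * ((r:ℂ)/q)) = (r:ℂ) * (2 * Real.pi * Complex.I) := by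
      field_simp
    rw [h2]
    exact Complex.exp_nat_mul_two_pi_mul_I r
  by_cases hd : q ∣ r
  · obtain ⟨t, rfl⟩ := hd
    have hz1 : z = 1 := by
      rw [hzdef]
      have : ((q * t : ℕ):ℂ)/q = ((t:ℕ):ℂ) := by
        push_cast
        rw [mul_comm]
        exact mul_div_cancel_right₀ _ hq'
      rw [this]
      have h3 : 2 * (Real.pi:ℂ) * Complex.I * ((t:ℕ):ℂ) = ((t:ℕ):ℂ) * (2 * Real.pi * Complex.I) := by ring
      rw [h3]
      exact Complex.exp_nat_mul_two_pi_mul_I t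
    simp [hz, hz1]
  · have hz1 : z ≠ 1 := by
      intro h
      apply hd
      rw [hzdef, Complex.exp_eq_one_iff] at h
      obtain ⟨t, ht⟩ := h
      have h2 : (2 * (Real.pi:ℂ) * Complex.I) ≠ 0 := by
        simp [Real.pi_ne_zero, Complex.I_ne_zero]
      have h4 : (2 * (Real.pi:ℂ) * Complex.I) * ((r:ℂ)/q) = (2 * (Real.pi:ℂ) * Complex.I) * t := by
        linear_combination ht
      have h5 := mul_left_cancel₀ h2 h4
      rw [div_eq_iff hq'] at h5
      have h6 : (r:ℤ) = t * q := by exact_mod_cast h5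
      exact Int.natCast_dvd_natCast.mp ⟨t, by linarith [h6]⟩
    rw [Finset.sum_congr rfl fun j _ => hz j, geom_sum_eq hz1, hzq]
    simp [hd]

lemma sum_moebius_divisors (m : ℕ) :
    ∑ e ∈ m.divisors, (ArithmeticFunction.moebius e : ℤ) = if m = 1 then 1 else 0 := by
  rw [← ArithmeticFunction.coe_mul_zeta_apply, ArithmeticFunction.moebius_mul_coe_zeta,
    ArithmeticFunction.one_apply]

lemma ramanujan_sum (r n : ℕ) [NeZero n] :
    ∑ d : (ZMod n)ˣ, eterm r n (d : ZMod n).val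
      = ∑ d ∈ (Nat.gcd n r).divisors, ((ArithmeticFunction.moebius (n / d) : ℤ) : ℂ) * d := by
  have hn : n ≠ 0 := NeZero.ne n
  -- step a : convert to sum over range n filtered by coprimality
  have step1 : ∑ d : (ZMod n)ˣ, eterm r n (d : ZMod n).val
      = ∑ j ∈ (range n).filter (fun j => Nat.Coprime j n), eterm r n j := by
    refine Finset.sum_bij (fun d _ => (d : ZMod n).val) ?_ ?_ ?_ ?_
    · intro d _
      simp only [mem_filter, mem_range]
      exact ⟨ZMod.val_lt _, ZMod.val_coe_unit_coprime d⟩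
    · intro d₁ _ d₂ _ h
      exact Units.ext (ZMod.val_injective n h)
    · intro j hj
      simp only [mem_filter, mem_range] at hj
      refine ⟨ZMod.unitOfCoprime j hj.2, mem_univ _, ?_⟩
      show ((ZMod.unitOfCoprime j hj.2 : (ZMod n)ˣ) : ZMod n).val = j
      rw [ZMod.coe_unitOfCoprime, ZMod.val_natCast, Nat.mod_eq_of_lt hj.1]
    · intro d _
      rfl
  -- step b/c : Möbius indicator
  have step2 : ∀ j, (if Nat.Coprime j n then eterm r n j else 0)
      = ∑ e ∈ (Nat.gcd j n).divisors, ((moebius e : ℤ) : ℂ) * eterm r n j := by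
    intro j
    rw [← Finset.sum_mul]
    have : ((∑ e ∈ (Nat.gcd j n).divisors, (moebius e : ℤ) : ℤ) : ℂ)
        = ∑ e ∈ (Nat.gcd j n).divisors, ((moebius e : ℤ) : ℂ) := by push_cast; rfl
    rw [← this, sum_moebius_divisors]
    by_cases h : Nat.Coprime j n
    · rw [if_pos h, if_pos h, Int.cast_one, one_mul]
    · rw [if_neg h, if_neg h, Int.cast_zero, zero_mul]
  -- step d : divisors of gcd as filtered divisors of n
  have step3 : ∀ j, (Nat.gcd j n).divisors = n.divisors.filter (· ∣ j) := by
    intro j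
    ext e
    simp only [Nat.mem_divisors, mem_filter, Nat.dvd_gcd_iff]
    constructor
    · rintro ⟨h1, -⟩
      exact ⟨⟨h1.2, hn⟩, h1.1⟩
    · rintro ⟨⟨h1, -⟩, h2⟩
      exact ⟨⟨h2, h1⟩, fun h0 => hn (Nat.gcd_eq_zero_iff.mp h0).2⟩
  rw [step1, Finset.sum_filter,
    Finset.sum_congr rfl fun j _ => by rw [step2 j, step3 j, Finset.sum_filter]]
  rw [Finset.sum_comm]
  -- now : ∑ e ∈ n.divisors, ∑ j ∈ range n, if e ∣ j then μ e * eterm r n j else 0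
  have step4 : ∀ e ∈ n.divisors,
      (∑ j ∈ range n, if e ∣ j then ((moebius e : ℤ) : ℂ) * eterm r n j else 0)
        = ((moebius e : ℤ) : ℂ) * (if (n / e) ∣ r then ((n / e : ℕ) : ℂ) else 0) := by
    intro e he
    rw [Nat.mem_divisors] at he
    have he0 : e ≠ 0 := fun h => hn (by simpa [h] using he.1)
    have hq0 : n / e ≠ 0 := by
      intro h
      have h2 := Nat.div_mul_cancel he.1
      rw [h, zero_mul] at h2
      exact hn h2.symm
    rw [← Finset.sum_filter, ← Finset.mul_sum, ← sum_eterm_range r hq0]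
    congr 1
    refine (Finset.sum_bij (fun t _ => t * e) ?_ ?_ ?_ ?_).symm
    · intro t ht
      simp only [mem_range] at ht
      simp only [mem_filter, mem_range]
      constructor
      · calc t * e < (n / e) * e := by
              exact (Nat.mul_lt_mul_right (Nat.pos_of_ne_zero he0)).mpr ht
          _ = n := Nat.div_mul_cancel he.1
      · exact dvd_mul_left e t
    · intro t₁ _ t₂ _ h
      exact Nat.eq_of_mul_eq_mul_right (Nat.pos_of_ne_zero he0) h
    · intro j hj
      simp only [mem_filter, mem_range] at hj
      refine ⟨j / e, mem_range.mpr ?_, Nat.div_mul_cancel hj.2⟩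
      exact Nat.div_lt_div_of_lt_of_dvd he.1 hj.1
    · intro t _
      have h3 : eterm r ((n / e) * e) (t * e) = eterm r (n / e) t := eterm_mul_right r he0 _ _
      rw [Nat.div_mul_cancel he.1] at h3
      exact h3.symm
  rw [Finset.sum_congr rfl step4]
  -- step g/h : reindex e ↦ n / e
  have step5 : ∀ e ∈ n.divisors,
      ((moebius e : ℤ) : ℂ) * (if (n / e) ∣ r then ((n / e : ℕ) : ℂ) else 0)
        = (fun d => ((moebius (n / d) : ℤ) : ℂ) * (if d ∣ r then (d : ℂ) else 0)) (n / e) := by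
    intro e he
    rw [Nat.mem_divisors] at he
    simp only
    rw [Nat.div_div_self he.1 hn]
  rw [Finset.sum_congr rfl step5, Nat.sum_div_divisors n (fun d => ((moebius (n / d) : ℤ) : ℂ) * (if d ∣ r then (d : ℂ) else 0))]
  -- step i : restrict to divisors of gcd n r
  have step6 : (Nat.gcd n r).divisors = n.divisors.filter (· ∣ r) := by
    ext e
    simp only [Nat.mem_divisors, mem_filter, Nat.dvd_gcd_iff]
    constructor
    · rintro ⟨h1, -⟩
      exact ⟨⟨h1.1, hn⟩, h1.2⟩
    · rintro ⟨⟨h1, -⟩, h2⟩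
      exact ⟨⟨h1, h2⟩, fun h0 => hn (Nat.gcd_eq_zero_iff.mp h0).1⟩
  rw [step6, Finset.sum_filter]
  refine Finset.sum_congr rfl fun d _ => ?_
  by_cases h : d ∣ r
  · rw [if_pos h, if_pos h]
  · rw [if_neg h, if_neg h, mul_zero]

lemma crt_apply {m n : ℕ} [NeZero (m * n)] (h : Nat.Coprime m n) (x : ZMod (m * n)) :
    ZMod.chineseRemainder h x = ((x.val : ZMod m), (x.val : ZMod n)) := by
  have h1 : ZMod.chineseRemainder h x
      = ZMod.castHom (show Nat.lcm m n ∣ m * n by simp [Nat.lcm_dvd_iff])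
          (ZMod m × ZMod n) x := rfl
  rw [h1, ZMod.castHom_apply, ← ZMod.natCast_val]
  exact Prod.ext (by simp) (by simp)

/-- Factorization of the twisted character/Ramanujan sum
∑_{d ∈ (ℤ/cℤ)^×} χ(d)·e(d·r/c) for c = Q^k·c′ with (c′, Q) = 1
(Section 5 of the paper). -/
theorem stmt5 (Q k c' r : ℕ) (hQ : 0 < Q) (hk : 0 < k) (hc' : 0 < c') (hr : 0 < r)
    (hcop : Nat.Coprime c' Q) (χ : DirichletCharacter ℂ Q)
    (c : ℕ) [NeZero c] [NeZero (Q ^ k)] (hc : c = Q ^ k * c') :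
    ∑ d : (ZMod c)ˣ,
        χ (ZMod.castHom (show Q ∣ c by
              rw [hc]; exact Dvd.dvd.mul_right (dvd_pow_self Q hk.ne') c') (ZMod Q)
            (d : ZMod c)) *
          Complex.exp (2 * Real.pi * Complex.I *
            ((((d : ZMod c).val : ℝ) * r / c : ℝ) : ℂ)) =
      χ (c' : ZMod Q) *
        (∑ d : (ZMod (Q ^ k))ˣ,
            χ (ZMod.castHom (dvd_pow_self Q hk.ne') (ZMod Q) (d : ZMod (Q ^ k))) *
              Complex.exp (2 * Real.pi * Complex.I *
                ((((d : ZMod (Q ^ k)).val : ℝ) * r / (Q ^ k) : ℝ) : ℂ))) *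
        ∑ d ∈ (Nat.gcd c' r).divisors,
          ((ArithmeticFunction.moebius (c' / d) : ℤ) : ℂ) * (d : ℂ) := by
  subst hc
  haveI : NeZero c' := ⟨hc'.ne'⟩
  have hQk : (Q ^ k : ℕ) ≠ 0 := NeZero.ne _
  have hmn : (Q ^ k).Coprime c' := Nat.Coprime.pow_left k hcop.symm
  set φ := ZMod.chineseRemainder hmn with hφ
  set U : (ZMod (Q ^ k * c'))ˣ ≃* (ZMod (Q ^ k))ˣ × (ZMod c')ˣ :=
    (Units.mapEquiv φ.toMulEquiv).trans MulEquiv.prodUnits with hU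
  set Un : (ZMod (Q ^ k))ˣ := ZMod.unitOfCoprime c' (hcop.pow_right k) with hUn
  set Um : (ZMod c')ˣ := ZMod.unitOfCoprime (Q ^ k) hmn with hUm
  set nv : ℕ := ((Un⁻¹ : (ZMod (Q ^ k))ˣ) : ZMod (Q ^ k)).val with hnv
  set mv : ℕ := ((Um⁻¹ : (ZMod c')ˣ) : ZMod c').val with hmv
  -- coe facts for the equivalence
  have hU1 : ∀ d : (ZMod (Q ^ k * c'))ˣ,
      (((U d).1 : (ZMod (Q ^ k))ˣ) : ZMod (Q ^ k)) = ((d : ZMod (Q ^ k * c')).val : ZMod (Q ^ k)) := by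
    intro d
    have h1 : (((U d).1 : (ZMod (Q ^ k))ˣ) : ZMod (Q ^ k)) = (φ (d : ZMod (Q ^ k * c'))).1 := rfl
    rw [h1, crt_apply hmn]
  have hU2 : ∀ d : (ZMod (Q ^ k * c'))ˣ,
      (((U d).2 : (ZMod c')ˣ) : ZMod c') = ((d : ZMod (Q ^ k * c')).val : ZMod c') := by
    intro d
    have h1 : (((U d).2 : (ZMod c')ˣ) : ZMod c') = (φ (d : ZMod (Q ^ k * c'))).2 := rfl
    rw [h1, crt_apply hmn]
  have hχcast : ∀ a : (ZMod (Q ^ k))ˣ,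
      ZMod.castHom (dvd_pow_self Q hk.ne') (ZMod Q) ((Un * a : (ZMod (Q ^ k))ˣ) : ZMod (Q ^ k))
        = (c' : ZMod Q) * ZMod.castHom (dvd_pow_self Q hk.ne') (ZMod Q) (a : ZMod (Q ^ k)) := by
    intro a
    rw [Units.val_mul, map_mul]
    congr 1
    rw [hUn, ZMod.coe_unitOfCoprime, map_natCast]
  -- pointwise key identity
  have key : ∀ d : (ZMod (Q ^ k * c'))ˣ,
      χ (ZMod.castHom (show Q ∣ Q ^ k * c' from Dvd.dvd.mul_right (dvd_pow_self Q hk.ne') c')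
            (ZMod Q) (d : ZMod (Q ^ k * c'))) *
          eterm r (Q ^ k * c') ((d : ZMod (Q ^ k * c')).val)
        = (χ (ZMod.castHom (dvd_pow_self Q hk.ne') (ZMod Q)
              (((U d).1 : (ZMod (Q ^ k))ˣ) : ZMod (Q ^ k))) *
            eterm r (Q ^ k) ((((U d).1 : (ZMod (Q ^ k))ˣ) : ZMod (Q ^ k)).val * nv)) *
          eterm r c' ((((U d).2 : (ZMod c')ˣ) : ZMod c').val * mv) := by
    intro d
    set a := (U d).1 with ha
    set b := (U d).2 with hb
    set dv := (d : ZMod (Q ^ k * c')).val with hdv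
    have hd1 : (dv : ZMod (Q ^ k)) = (a : ZMod (Q ^ k)) := (hU1 d).symm
    have hd2 : (dv : ZMod c') = (b : ZMod c') := (hU2 d).symm
    -- character part
    have hχ : χ (ZMod.castHom (show Q ∣ Q ^ k * c' from Dvd.dvd.mul_right (dvd_pow_self Q hk.ne') c')
          (ZMod Q) (d : ZMod (Q ^ k * c')))
        = χ (ZMod.castHom (dvd_pow_self Q hk.ne') (ZMod Q) (a : ZMod (Q ^ k))) := by
      congr 1
      have h2 := congrArg (ZMod.castHom (dvd_pow_self Q hk.ne') (ZMod Q)) hd1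
      rw [map_natCast] at h2
      rw [ZMod.castHom_apply, ← ZMod.natCast_val, ← hdv, h2]
    -- exponential part
    set s : ℕ := ((a : ZMod (Q ^ k)).val * nv) * c' + (((b : ZMod c')).val * mv) * Q ^ k with hs
    have φnat : ∀ t : ℕ, φ (t : ZMod (Q ^ k * c')) = ((t : ZMod (Q ^ k)), (t : ZMod c')) := by
      intro t
      rw [map_natCast]
      exact Prod.ext (by simp) (by simp)
    have keycast : (dv : ZMod (Q ^ k * c')) = (s : ZMod (Q ^ k * c')) := by
      apply φ.injective
      rw [φnat, φnat]
      refine Prod.ext ?_ ?_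
      · show (dv : ZMod (Q ^ k)) = (s : ZMod (Q ^ k))
        rw [hd1, hs]
        have hz : ((((b : ZMod c')).val * mv * Q ^ k : ℕ) : ZMod (Q ^ k)) = 0 := by
          rw [Nat.cast_mul, ZMod.natCast_self, mul_zero]
        rw [Nat.cast_add, hz, add_zero, Nat.cast_mul, Nat.cast_mul,
          ZMod.natCast_zmod_val, hnv, ZMod.natCast_zmod_val,
          show ((c' : ℕ) : ZMod (Q ^ k)) = (Un : ZMod (Q ^ k)) from
            (ZMod.coe_unitOfCoprime c' (hcop.pow_right k)).symm,
          mul_assoc, Units.inv_mul, mul_one]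
      · show (dv : ZMod c') = (s : ZMod c')
        rw [hd2, hs]
        have hz : ((((a : ZMod (Q ^ k))).val * nv * c' : ℕ) : ZMod c') = 0 := by
          rw [Nat.cast_mul, ZMod.natCast_self, mul_zero]
        rw [Nat.cast_add, hz, zero_add, Nat.cast_mul, Nat.cast_mul,
          ZMod.natCast_zmod_val, hmv, ZMod.natCast_zmod_val,
          show ((Q ^ k : ℕ) : ZMod c') = (Um : ZMod c') from
            (ZMod.coe_unitOfCoprime (Q ^ k) hmn).symm,
          mul_assoc, Units.inv_mul, mul_one]
    have heterm : eterm r (Q ^ k * c') dv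
        = eterm r (Q ^ k) ((a : ZMod (Q ^ k)).val * nv) * eterm r c' ((b : ZMod c').val * mv) := by
      rw [eterm_congr r keycast, hs, eterm_add]
      congr 1
      · exact eterm_mul_right r hc'.ne' _ _
      · have hcomm : Q ^ k * c' = c' * Q ^ k := mul_comm _ _
        rw [hcomm]
        exact eterm_mul_right r hQk _ _
    rw [hχ, heterm, mul_assoc]
  -- lemma A : reindex the Q^k-sum by multiplication by Un
  have lemA : ∑ a : (ZMod (Q ^ k))ˣ,
        χ (ZMod.castHom (dvd_pow_self Q hk.ne') (ZMod Q) (a : ZMod (Q ^ k))) *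
          eterm r (Q ^ k) ((a : ZMod (Q ^ k)).val * nv)
      = χ (c' : ZMod Q) * ∑ a : (ZMod (Q ^ k))ˣ,
          χ (ZMod.castHom (dvd_pow_self Q hk.ne') (ZMod Q) (a : ZMod (Q ^ k))) *
            eterm r (Q ^ k) ((a : ZMod (Q ^ k)).val) := by
    rw [Finset.mul_sum]
    refine (Fintype.sum_equiv (Equiv.mulLeft Un) _ _ ?_).symm
    intro x
    show χ (c' : ZMod Q) * (χ (ZMod.castHom (dvd_pow_self Q hk.ne') (ZMod Q) (x : ZMod (Q ^ k))) *
        eterm r (Q ^ k) ((x : ZMod (Q ^ k)).val))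
      = χ (ZMod.castHom (dvd_pow_self Q hk.ne') (ZMod Q) ((Un * x : (ZMod (Q ^ k))ˣ) : ZMod (Q ^ k))) *
        eterm r (Q ^ k) (((Un * x : (ZMod (Q ^ k))ˣ) : ZMod (Q ^ k)).val * nv)
    have he : eterm r (Q ^ k) (((Un * x : (ZMod (Q ^ k))ˣ) : ZMod (Q ^ k)).val * nv)
        = eterm r (Q ^ k) ((x : ZMod (Q ^ k)).val) := by
      apply eterm_congr
      rw [Nat.cast_mul, ZMod.natCast_zmod_val, hnv, ZMod.natCast_zmod_val,
        Units.val_mul, mul_comm ((Un : ZMod (Q ^ k))) _, mul_assoc, Units.mul_inv, mul_one,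
        ZMod.natCast_zmod_val]
    rw [he, hχcast x, map_mul]
    ring
  -- lemma B : reindex the c'-sum by multiplication by Um
  have lemB : ∑ b : (ZMod c')ˣ, eterm r c' ((b : ZMod c').val * mv)
      = ∑ b : (ZMod c')ˣ, eterm r c' ((b : ZMod c').val) := by
    refine (Fintype.sum_equiv (Equiv.mulLeft Um) _ _ ?_).symm
    intro x
    show eterm r c' ((x : ZMod c').val)
      = eterm r c' (((Um * x : (ZMod c')ˣ) : ZMod c').val * mv)
    refine (eterm_congr r ?_).symm
    rw [Nat.cast_mul, ZMod.natCast_zmod_val, hmv, ZMod.natCast_zmod_val,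
      Units.val_mul, mul_comm ((Um : ZMod c')) _, mul_assoc, Units.mul_inv, mul_one,
      ZMod.natCast_zmod_val]
  -- assemble
  have espec : ∀ (N j : ℕ),
      Complex.exp (2 * Real.pi * Complex.I * (((j : ℝ) * r / N : ℝ) : ℂ)) = eterm r N j :=
    fun _ _ => rfl
  simp only [← Nat.cast_pow, espec]
  rw [Finset.sum_congr rfl (fun d _ => key d)]
  rw [show (∑ d : (ZMod (Q ^ k * c'))ˣ,
        (χ (ZMod.castHom (dvd_pow_self Q hk.ne') (ZMod Q)
              (((U d).1 : (ZMod (Q ^ k))ˣ) : ZMod (Q ^ k))) *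
            eterm r (Q ^ k) ((((U d).1 : (ZMod (Q ^ k))ˣ) : ZMod (Q ^ k)).val * nv)) *
          eterm r c' ((((U d).2 : (ZMod c')ˣ) : ZMod c').val * mv))
      = ∑ p : (ZMod (Q ^ k))ˣ × (ZMod c')ˣ,
        (χ (ZMod.castHom (dvd_pow_self Q hk.ne') (ZMod Q) ((p.1 : (ZMod (Q ^ k))ˣ) : ZMod (Q ^ k))) *
            eterm r (Q ^ k) (((p.1 : (ZMod (Q ^ k))ˣ) : ZMod (Q ^ k)).val * nv)) *
          eterm r c' (((p.2 : (ZMod c')ˣ) : ZMod c').val * mv)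
    from Fintype.sum_equiv U.toEquiv _ _ (fun d => rfl)]
  rw [Fintype.sum_prod_type]
  dsimp only
  rw [← Finset.sum_mul_sum]
  rw [lemA, lemB, ramanujan_sum r c', mul_assoc]
end

section
/- For all positive integers c and r, the Ramanujan sum satisfies ∑_{d ∈ (ℤ/cℤ)^×} e(d·r/c) = ∑_{d | gcd(c, r)} μ(c/d)·d, where the right-hand sum runs over the positive divisors d of gcd(c, r). -/
open Complex

open Finset in
lemma moebius_sum_divisors (n : ℕ) :
    ∑ d ∈ n.divisors, (ArithmeticFunction.moebius d : ℂ) = if n = 1 then 1 else 0 := by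
  have h := congrArg (fun f => f n) ArithmeticFunction.moebius_mul_coe_zeta
  simp only [ArithmeticFunction.coe_mul_zeta_apply, ArithmeticFunction.one_apply] at h
  calc ∑ d ∈ n.divisors, (ArithmeticFunction.moebius d : ℂ)
      = ((∑ d ∈ n.divisors, ArithmeticFunction.moebius d : ℤ) : ℂ) := by push_cast; rfl
    _ = ((if n = 1 then 1 else 0 : ℤ) : ℂ) := by rw [h]
    _ = if n = 1 then 1 else 0 := by split_ifs <;> simp

lemma geom_sum_exp (m a : ℕ) [NeZero m] :
    ∑ j ∈ Finset.range m, Complex.exp (2 * Real.pi * Complex.I * (j * a) / m)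
      = if m ∣ a then (m : ℂ) else 0 := by
  have key : ∀ j : ℕ,
      Complex.exp (2 * Real.pi * Complex.I * (j * a) / m)
        = ZMod.stdAddChar ((j : ZMod m) * (a : ZMod m)) := by
    intro j
    have h1 : ((j : ZMod m) * (a : ZMod m)) = (((j * a : ℕ) : ℤ) : ZMod m) := by push_cast; ring
    rw [h1, ZMod.stdAddChar_coe]
    push_cast
    ring_nf
  simp_rw [key]
  have hbij : ∑ j ∈ Finset.range m, ZMod.stdAddChar ((j : ZMod m) * (a : ZMod m))
      = ∑ x : ZMod m, ZMod.stdAddChar (x * (a : ZMod m)) := by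
    refine Finset.sum_nbij' (fun j => (j : ZMod m)) (fun x => x.val) ?_ ?_ ?_ ?_ ?_
    · intro j hj; exact Finset.mem_univ _
    · intro x _; exact Finset.mem_range.mpr (ZMod.val_lt x)
    · intro j hj; exact ZMod.val_natCast_of_lt (Finset.mem_range.mp hj)
    · intro x _; exact ZMod.natCast_zmod_val x
    · intro j hj; rfl
  rw [hbij, AddChar.sum_mulShift _ (ZMod.isPrimitive_stdAddChar m)]
  have hz : ((a : ZMod m) = 0) ↔ m ∣ a := ZMod.natCast_eq_zero_iff a m
  by_cases h : m ∣ a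
  · simp [h, hz.mpr h, ZMod.card]
  · rw [if_neg fun hh => h (hz.mp hh), if_neg h, Nat.cast_zero]


/-- Ramanujan sum identity: ∑_{d ∈ (ℤ/cℤ)^×} e(d·r/c) = ∑_{d | gcd(c,r)} μ(c/d)·d. -/
theorem stmt6 (c r : ℕ) [NeZero c] (hc : 0 < c) (hr : 0 < r) :
    ∑ d : (ZMod c)ˣ,
        Complex.exp (2 * Real.pi * Complex.I * ((((d : ZMod c).val : ℝ) * r / c : ℝ) : ℂ)) =
      ∑ d ∈ (Nat.gcd c r).divisors,
        ((ArithmeticFunction.moebius (c / d) : ℤ) : ℂ) * (d : ℂ) := by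
  have hc0 : c ≠ 0 := hc.ne'
  set F : ℕ → ℂ := fun k => Complex.exp (2 * Real.pi * Complex.I * (k * r) / c) with hF
  -- Step 0: sum over units = sum over coprime residues
  have step0 : ∑ d : (ZMod c)ˣ,
      Complex.exp (2 * Real.pi * Complex.I * ((((d : ZMod c).val : ℝ) * r / c : ℝ) : ℂ))
      = ∑ k ∈ (Finset.range c).filter (fun k => Nat.Coprime k c), F k := by
    refine Finset.sum_nbij' (fun d => (d : ZMod c).val)
      (fun k => if h : Nat.Coprime k c then ZMod.unitOfCoprime k h else 1) ?_ ?_ ?_ ?_ ?_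
    · intro d _
      exact Finset.mem_filter.mpr ⟨Finset.mem_range.mpr (ZMod.val_lt _),
        ZMod.val_coe_unit_coprime d⟩
    · intro k _; exact Finset.mem_univ _
    · intro d _
      rw [dif_pos (ZMod.val_coe_unit_coprime d)]
      ext
      rw [ZMod.coe_unitOfCoprime, ZMod.natCast_zmod_val]
    · intro k hk
      obtain ⟨hk1, hk2⟩ := Finset.mem_filter.mp hk
      rw [dif_pos hk2]
      simp only [ZMod.coe_unitOfCoprime]
      exact ZMod.val_natCast_of_lt (Finset.mem_range.mp hk1)
    · intro d _
      simp only [hF]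
      push_cast
      ring_nf
  rw [step0, Finset.sum_filter]
  -- Step 2+3: Möbius expansion of coprimality indicator
  have step2 : ∀ k ∈ Finset.range c,
      (if Nat.Coprime k c then F k else 0)
        = ∑ g ∈ c.divisors, (if g ∣ k then (ArithmeticFunction.moebius g : ℂ) * F k else 0) := by
    intro k _
    have hdiveq : (Nat.gcd k c).divisors = c.divisors.filter (· ∣ k) := by
      ext g
      simp only [Nat.mem_divisors, Finset.mem_filter]
      constructor
      · rintro ⟨hg, hne⟩
        exact ⟨⟨hg.trans (Nat.gcd_dvd_right _ _), hc0⟩, hg.trans (Nat.gcd_dvd_left _ _)⟩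
      · rintro ⟨⟨hgc, _⟩, hgk⟩
        exact ⟨Nat.dvd_gcd hgk hgc, fun h => hc0 (Nat.eq_zero_of_gcd_eq_zero_right h)⟩
    have hmob := moebius_sum_divisors (Nat.gcd k c)
    rw [hdiveq, Finset.sum_filter] at hmob
    have : (if Nat.Coprime k c then F k else 0)
        = (if Nat.gcd k c = 1 then (1:ℂ) else 0) * F k := by
      unfold Nat.Coprime
      split_ifs <;> simp
    rw [this, ← hmob, Finset.sum_mul]
    refine Finset.sum_congr rfl fun g _ => ?_
    split_ifs <;> simp
  rw [Finset.sum_congr rfl step2, Finset.sum_comm]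
  -- Step 5: inner geometric sums
  have step5 : ∀ g ∈ c.divisors,
      ∑ k ∈ Finset.range c, (if g ∣ k then (ArithmeticFunction.moebius g : ℂ) * F k else 0)
        = (ArithmeticFunction.moebius g : ℂ) * (if (c / g) ∣ r then ((c / g : ℕ) : ℂ) else 0) := by
    intro g hg
    obtain ⟨hgc, _⟩ := Nat.mem_divisors.mp hg
    have hg0 : 0 < g := Nat.pos_of_dvd_of_pos hgc hc
    have hcg0 : 0 < c / g := Nat.div_pos (Nat.le_of_dvd hc hgc) hg0
    haveI : NeZero (c / g) := ⟨hcg0.ne'⟩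
    rw [← Finset.sum_filter]
    have hre : ∑ k ∈ (Finset.range c).filter (g ∣ ·), (ArithmeticFunction.moebius g : ℂ) * F k
        = ∑ j ∈ Finset.range (c / g),
            (ArithmeticFunction.moebius g : ℂ)
              * Complex.exp (2 * Real.pi * Complex.I * (j * r) / (c / g : ℕ)) := by
      refine Finset.sum_nbij' (fun k => k / g) (fun j => g * j) ?_ ?_ ?_ ?_ ?_
      · intro k hk
        obtain ⟨hk1, hk2⟩ := Finset.mem_filter.mp hk
        exact Finset.mem_range.mpr (Nat.div_lt_div_of_lt_of_dvd hgc (Finset.mem_range.mp hk1))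
      · intro j hj
        refine Finset.mem_filter.mpr ⟨Finset.mem_range.mpr ?_, Dvd.intro j rfl⟩
        calc g * j < g * (c / g) := by
              exact (Nat.mul_lt_mul_left hg0).mpr (Finset.mem_range.mp hj)
          _ = c := Nat.mul_div_cancel' hgc
      · intro k hk
        exact Nat.mul_div_cancel' (Finset.mem_filter.mp hk).2
      · intro j _
        exact Nat.mul_div_cancel_left j hg0
      · intro k hk
        obtain ⟨hk1, hk2⟩ := Finset.mem_filter.mp hk
        congr 1
        simp only [hF]
        congr 1
        have hcgc : (g : ℂ) * ((c / g : ℕ) : ℂ) = (c : ℂ) := by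
          exact_mod_cast congrArg (Nat.cast : ℕ → ℂ) (Nat.mul_div_cancel' hgc)
        have hkg : (g : ℂ) * ((k / g : ℕ) : ℂ) = (k : ℂ) := by
          exact_mod_cast congrArg (Nat.cast : ℕ → ℂ) (Nat.mul_div_cancel' hk2)
        have hcC : (c : ℂ) ≠ 0 := Nat.cast_ne_zero.mpr hc0
        have hcgC : ((c / g : ℕ) : ℂ) ≠ 0 := Nat.cast_ne_zero.mpr hcg0.ne'
        rw [div_eq_div_iff hcC hcgC]
        rw [← hcgc, ← hkg]
        ring
    rw [hre, ← Finset.mul_sum, geom_sum_exp (c / g) r]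
  rw [Finset.sum_congr rfl step5]
  -- Step 6+7: reindex d = c / g
  rw [show ∀ (s : Finset ℕ) (f : ℕ → ℂ), ∑ g ∈ s, f g = ∑ g ∈ s, f g from fun _ _ => rfl]
  simp_rw [mul_ite, mul_zero, ← Finset.sum_filter]
  refine Finset.sum_nbij' (fun g => c / g) (fun d => c / d) ?_ ?_ ?_ ?_ ?_
  · intro g hg
    obtain ⟨hg1, hg2⟩ := Finset.mem_filter.mp hg
    obtain ⟨hgc, _⟩ := Nat.mem_divisors.mp hg1
    refine Nat.mem_divisors.mpr ⟨Nat.dvd_gcd (Nat.div_dvd_of_dvd hgc) hg2, ?_⟩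
    simp [Nat.gcd_eq_zero_iff, hc0]
  · intro d hd
    obtain ⟨hdg, hgne⟩ := Nat.mem_divisors.mp hd
    have hdc : d ∣ c := hdg.trans (Nat.gcd_dvd_left _ _)
    have hdr : d ∣ r := hdg.trans (Nat.gcd_dvd_right _ _)
    refine Finset.mem_filter.mpr ⟨Nat.mem_divisors.mpr ⟨Nat.div_dvd_of_dvd hdc, hc0⟩, ?_⟩
    rw [Nat.div_div_self hdc hc0]
    exact hdr
  · intro g hg
    obtain ⟨hg1, _⟩ := Finset.mem_filter.mp hg
    exact Nat.div_div_self (Nat.mem_divisors.mp hg1).1 hc0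
  · intro d hd
    have hdc : d ∣ c := (Nat.mem_divisors.mp hd).1.trans (Nat.gcd_dvd_left _ _)
    exact Nat.div_div_self hdc hc0
  · intro g hg
    obtain ⟨hg1, _⟩ := Finset.mem_filter.mp hg
    rw [Nat.div_div_self (Nat.mem_divisors.mp hg1).1 hc0]
end

section
/- Let α : ℕ × ℕ → ℂ satisfy α(0, m) = 1 for all m ≥ 0 and |α(ℓ, m)| ≤ 2^{−ℓ} for all ℓ ≥ 1 and all m ≥ 0. Define β : ℕ → ℂ by β(0) = 1 and β(ℓ) = −∑_{ℓ₁=0}^{ℓ−1} β(ℓ₁)·α(ℓ − ℓ₁, ℓ₁) for ℓ ≥ 1. Then for every natural number A and every complex number w with |w| ≤ 1, one has | ∑_{ℓ₁=0}^{A} β(ℓ₁)·( ∑_{ℓ₂=0}^{A} α(ℓ₂, ℓ₁)·w^{ℓ₂} )·w^{ℓ₁} − 1 | ≤ 4·|w|^{A+1}. -/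
open Finset

lemma geom_half_le_two' (n : ℕ) : ∑ i ∈ range n, ((2:ℝ)^i)⁻¹ ≤ 2 := by
  have := sum_geometric_two_le n
  simpa [one_div, inv_pow] using this

lemma geom_Ico_le' (a b : ℕ) : ∑ i ∈ Ico a b, ((2:ℝ)^i)⁻¹ ≤ 2 * ((2:ℝ)^a)⁻¹ := by
  rcases le_or_gt b a with h | h
  · rw [Ico_eq_empty (by omega)]
    simp
  · rw [sum_Ico_eq_sum_range]
    have h1 : ∀ i ∈ range (b - a), ((2:ℝ)^(a+i))⁻¹ = ((2:ℝ)^a)⁻¹ * ((2:ℝ)^i)⁻¹ := by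
      intro i _; rw [pow_add, mul_inv]
    rw [sum_congr rfl h1, ← mul_sum]
    calc ((2:ℝ)^a)⁻¹ * ∑ i ∈ range (b-a), ((2:ℝ)^i)⁻¹
        ≤ ((2:ℝ)^a)⁻¹ * 2 := by
          apply mul_le_mul_of_nonneg_left (geom_half_le_two' _) (by positivity)
      _ = 2 * ((2:ℝ)^a)⁻¹ := by ring

lemma geom_tail_le' (n : ℕ) : ∑ k ∈ range n, ((2:ℝ)^(n-k))⁻¹ ≤ 1 := by
  have h := Finset.sum_range_reflect (fun j => ((2:ℝ)^(n-j))⁻¹) n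
  rw [← h]
  have h1 : ∀ j ∈ range n, ((2:ℝ)^(n-(n-1-j)))⁻¹ = ((2:ℝ)^j)⁻¹ * (2:ℝ)⁻¹ := by
    intro j hj
    have hj' := mem_range.mp hj
    have h2 : n - (n-1-j) = j+1 := by omega
    rw [h2, pow_succ, mul_inv]
  rw [sum_congr rfl h1, ← sum_mul]
  calc (∑ j ∈ range n, ((2:ℝ)^j)⁻¹) * (2:ℝ)⁻¹ ≤ 2 * (2:ℝ)⁻¹ := by
        apply mul_le_mul_of_nonneg_right (geom_half_le_two' n) (by norm_num)
    _ = 1 := by norm_num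

/-- Approximation of the constant function 1 by a finite combination of
hypergeometric series (Section 4.2 of the paper). -/
theorem stmt8 (α : ℕ → ℕ → ℂ) (hα0 : ∀ m : ℕ, α 0 m = 1)
    (hα : ∀ ℓ m : ℕ, 1 ≤ ℓ → ‖α ℓ m‖ ≤ ((2 : ℝ) ^ ℓ)⁻¹)
    (β : ℕ → ℂ) (hβ0 : β 0 = 1)
    (hβ : ∀ ℓ : ℕ, 1 ≤ ℓ → β ℓ = -∑ ℓ₁ ∈ Finset.range ℓ, β ℓ₁ * α (ℓ - ℓ₁) ℓ₁)
    (A : ℕ) (w : ℂ) (hw : ‖w‖ ≤ 1) :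
    ‖(∑ ℓ₁ ∈ Finset.range (A + 1),
        β ℓ₁ * (∑ ℓ₂ ∈ Finset.range (A + 1), α ℓ₂ ℓ₁ * w ^ ℓ₂) * w ^ ℓ₁) - 1‖ ≤
      4 * ‖w‖ ^ (A + 1) := by
  have hw0 : (0:ℝ) ≤ ‖w‖ := norm_nonneg w
  set g : ℕ → ℕ → ℂ := fun ℓ₁ ℓ₂ => β ℓ₁ * α ℓ₂ ℓ₁ * w ^ (ℓ₁ + ℓ₂) with hg
  -- bound on β
  have hβb : ∀ ℓ, ‖β ℓ‖ ≤ 1 := by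
    intro ℓ
    induction ℓ using Nat.strong_induction_on with
    | _ ℓ ih =>
      rcases Nat.eq_zero_or_pos ℓ with h | h
      · simp [h, hβ0]
      · rw [hβ ℓ h, norm_neg]
        calc ‖∑ ℓ₁ ∈ range ℓ, β ℓ₁ * α (ℓ - ℓ₁) ℓ₁‖
            ≤ ∑ ℓ₁ ∈ range ℓ, ‖β ℓ₁ * α (ℓ - ℓ₁) ℓ₁‖ := norm_sum_le _ _
          _ ≤ ∑ ℓ₁ ∈ range ℓ, ((2:ℝ)^(ℓ - ℓ₁))⁻¹ := by
              apply sum_le_sum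
              intro i hi
              have hi' := mem_range.mp hi
              rw [norm_mul]
              have h1 : ‖β i‖ ≤ 1 := ih i hi'
              have h2 : ‖α (ℓ - i) i‖ ≤ ((2:ℝ)^(ℓ - i))⁻¹ := hα _ _ (by omega)
              calc ‖β i‖ * ‖α (ℓ-i) i‖ ≤ 1 * ((2:ℝ)^(ℓ-i))⁻¹ :=
                    mul_le_mul h1 h2 (norm_nonneg _) zero_le_one
                _ = _ := one_mul _
          _ ≤ 1 := geom_tail_le' ℓ
  -- triangle sum equals 1
  have hT : ∀ B : ℕ, ∑ ℓ₁ ∈ range (B+1), ∑ ℓ₂ ∈ range (B+1-ℓ₁), g ℓ₁ ℓ₂ = 1 := by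
    intro B
    induction B with
    | zero => simp [hg, hβ0, hα0]
    | succ B ihB =>
      have hdiag : ∑ ℓ₁ ∈ range (B+2), g ℓ₁ (B+1-ℓ₁) = 0 := by
        have h1 : ∀ i ∈ range (B+2), g i (B+1-i) = β i * α (B+1-i) i * w^(B+1) := by
          intro i hi
          have hi' := mem_range.mp hi
          have h2 : i + (B+1-i) = B+1 := by omega
          simp only [hg, h2]
        rw [sum_congr rfl h1, sum_range_succ, ← sum_mul]
        have hsum : ∑ i ∈ range (B+1), β i * α (B+1-i) i = - β (B+1) := by
          rw [hβ (B+1) (by omega), neg_neg]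
        rw [hsum, Nat.sub_self, hα0]
        ring
      rw [sum_range_succ]
      have h2 : ∀ ℓ₁ ∈ range (B+1), ∑ ℓ₂ ∈ range (B+1+1-ℓ₁), g ℓ₁ ℓ₂
          = ∑ ℓ₂ ∈ range (B+1-ℓ₁), g ℓ₁ ℓ₂ + g ℓ₁ (B+1-ℓ₁) := by
        intro i hi
        have hi' := mem_range.mp hi
        have h3 : B+1+1-i = (B+1-i)+1 := by omega
        rw [h3, sum_range_succ]
      rw [sum_congr rfl h2, sum_add_distrib, ihB]
      have h4 : B+1+1-(B+1) = 1 := by omega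
      rw [h4, sum_range_one]
      have h5 : g (B+1) 0 = g (B+1) (B+1-(B+1)) := by rw [Nat.sub_self]
      rw [sum_range_succ] at hdiag
      rw [h5]
      linear_combination hdiag
  -- rewrite main sum
  have hS : ∑ ℓ₁ ∈ range (A+1), β ℓ₁ * (∑ ℓ₂ ∈ range (A+1), α ℓ₂ ℓ₁ * w ^ ℓ₂) * w ^ ℓ₁
      = ∑ ℓ₁ ∈ range (A+1), ∑ ℓ₂ ∈ range (A+1), g ℓ₁ ℓ₂ := by
    apply sum_congr rfl
    intro i _
    calc β i * (∑ ℓ₂ ∈ range (A+1), α ℓ₂ i * w ^ ℓ₂) * w ^ i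
        = ∑ ℓ₂ ∈ range (A+1), β i * (α ℓ₂ i * w ^ ℓ₂) * w ^ i := by
          rw [mul_sum, sum_mul]
      _ = ∑ ℓ₂ ∈ range (A+1), g i ℓ₂ := by
          apply sum_congr rfl; intro j _; simp only [hg, pow_add]; ring
  have hsplit : ∀ ℓ₁ ∈ range (A+1), ∑ ℓ₂ ∈ range (A+1), g ℓ₁ ℓ₂
      = ∑ ℓ₂ ∈ range (A+1-ℓ₁), g ℓ₁ ℓ₂ + ∑ ℓ₂ ∈ Ico (A+1-ℓ₁) (A+1), g ℓ₁ ℓ₂ := by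
    intro i hi
    simp only [range_eq_Ico]
    exact (sum_Ico_consecutive _ (Nat.zero_le _) (by omega)).symm
  rw [hS, sum_congr rfl hsplit, sum_add_distrib, hT A, add_sub_cancel_left]
  calc ‖∑ ℓ₁ ∈ range (A+1), ∑ ℓ₂ ∈ Ico (A+1-ℓ₁) (A+1), g ℓ₁ ℓ₂‖
      ≤ ∑ ℓ₁ ∈ range (A+1), ‖∑ ℓ₂ ∈ Ico (A+1-ℓ₁) (A+1), g ℓ₁ ℓ₂‖ := norm_sum_le _ _
    _ ≤ ∑ ℓ₁ ∈ range (A+1), ∑ ℓ₂ ∈ Ico (A+1-ℓ₁) (A+1), ((2:ℝ)^ℓ₂)⁻¹ * ‖w‖^(A+1) := by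
        apply sum_le_sum
        intro i hi
        have hi' := mem_range.mp hi
        calc ‖∑ ℓ₂ ∈ Ico (A+1-i) (A+1), g i ℓ₂‖
            ≤ ∑ ℓ₂ ∈ Ico (A+1-i) (A+1), ‖g i ℓ₂‖ := norm_sum_le _ _
          _ ≤ ∑ ℓ₂ ∈ Ico (A+1-i) (A+1), ((2:ℝ)^ℓ₂)⁻¹ * ‖w‖^(A+1) := by
              apply sum_le_sum
              intro j hj
              have hij := mem_Ico.mp hj
              have hj1 : 1 ≤ j := by omega
              have hij' : A+1 ≤ i + j := by omega
              have hb : ‖β i‖ ≤ 1 := hβb i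
              have ha : ‖α j i‖ ≤ ((2:ℝ)^j)⁻¹ := hα j i hj1
              have hwp : ‖w‖^(i+j) ≤ ‖w‖^(A+1) := pow_le_pow_of_le_one hw0 hw hij'
              simp only [hg, norm_mul, norm_pow]
              calc ‖β i‖ * ‖α j i‖ * ‖w‖^(i+j)
                  ≤ 1 * ((2:ℝ)^j)⁻¹ * ‖w‖^(A+1) := by
                    apply mul_le_mul (mul_le_mul hb ha (norm_nonneg _) zero_le_one) hwp
                      (pow_nonneg hw0 _) (by positivity)
                _ = ((2:ℝ)^j)⁻¹ * ‖w‖^(A+1) := by ring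
    _ = (∑ ℓ₁ ∈ range (A+1), ∑ ℓ₂ ∈ Ico (A+1-ℓ₁) (A+1), ((2:ℝ)^ℓ₂)⁻¹) * ‖w‖^(A+1) := by
        rw [sum_mul]
        exact sum_congr rfl fun i _ => by rw [sum_mul]
    _ ≤ (∑ ℓ₁ ∈ range (A+1), 2 * ((2:ℝ)^(A+1-ℓ₁))⁻¹) * ‖w‖^(A+1) := by
        apply mul_le_mul_of_nonneg_right _ (pow_nonneg hw0 _)
        exact sum_le_sum fun i _ => geom_Ico_le' _ _
    _ = 2 * (∑ ℓ₁ ∈ range (A+1), ((2:ℝ)^(A+1-ℓ₁))⁻¹) * ‖w‖^(A+1) := by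
        rw [← mul_sum]
    _ ≤ 2 * 1 * ‖w‖^(A+1) := by
        apply mul_le_mul_of_nonneg_right _ (pow_nonneg hw0 _)
        exact mul_le_mul_of_nonneg_left (geom_tail_le' (A+1)) (by norm_num)
    _ ≤ 4 * ‖w‖^(A+1) := by
        apply mul_le_mul_of_nonneg_right (by norm_num) (pow_nonneg hw0 _)
end

section
/- For every real a ≥ 1 there exists a constant C = C(a) > 0 such that for all real u with |u| ≤ a and all real v, μ with |v + μ| ≥ 1 and |v − μ| ≥ 1, setting s = u + iv, one has |Γ((s − 1/2 + iμ)/2)| · |Γ((s − 1/2 − iμ)/2)| · cosh(πμ/2) ≤ C · e^{−(π/2)·max(|v| − |μ|, 0)} · (1 + |μ + v|)^{u/2 − 3/4} · (1 + |μ − v|)^{u/2 − 3/4}. -/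
open MeasureTheory Set

lemma st10_norm_Gamma_le (z : ℂ) (hz : 0 < z.re) : ‖Complex.Gamma z‖ ≤ Real.Gamma z.re := by
  rw [Complex.Gamma_eq_integral hz, Real.Gamma_eq_integral hz]
  refine (norm_integral_le_integral_norm _).trans_eq ?_
  refine setIntegral_congr_fun measurableSet_Ioi fun x hx => ?_
  rw [norm_mul, Complex.norm_cpow_eq_rpow_re_of_pos hx, Complex.norm_real, Real.norm_eq_abs,
    abs_of_nonneg (Real.exp_pos _).le]
  simp [Complex.sub_re]

lemma st10_realGamma_bdd {x : ℝ} (h1 : 1/2 ≤ x) (h2 : x ≤ 3/2) :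
    Real.Gamma x ≤ Real.Gamma (1/2) + Real.Gamma (3/2) := by
  have h0 : (0:ℝ) < x := by linarith
  rw [Real.Gamma_eq_integral h0, Real.Gamma_eq_integral (by norm_num : (0:ℝ) < 1/2),
    Real.Gamma_eq_integral (by norm_num : (0:ℝ) < 3/2)]
  rw [← integral_add (Real.GammaIntegral_convergent (by norm_num))
      (Real.GammaIntegral_convergent (by norm_num))]
  refine setIntegral_mono_on (Real.GammaIntegral_convergent h0)
    ((Real.GammaIntegral_convergent (by norm_num)).add
      (Real.GammaIntegral_convergent (by norm_num))) measurableSet_Ioi fun t ht => ?_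
  have ht0 : (0:ℝ) < t := ht
  rw [← mul_add]
  refine mul_le_mul_of_nonneg_left ?_ (Real.exp_pos _).le
  rcases le_total t 1 with h | h
  · have := Real.rpow_le_rpow_of_exponent_ge ht0 h (by linarith : (1:ℝ)/2 - 1 ≤ x - 1)
    have h2' : (0:ℝ) ≤ t ^ ((3:ℝ)/2 - 1) := Real.rpow_nonneg ht0.le _
    linarith
  · have := Real.rpow_le_rpow_of_exponent_le h (by linarith : x - 1 ≤ (3:ℝ)/2 - 1)
    have h2' : (0:ℝ) ≤ t ^ ((1:ℝ)/2 - 1) := Real.rpow_nonneg ht0.le _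
    linarith
open Complex in
lemma st10_line_half (y : ℝ) :
    ‖Complex.Gamma (1/2 + y*I)‖ * ‖Complex.Gamma (1/2 + y*I)‖
      = Real.pi / Real.cosh (Real.pi * y) := by
  set z : ℂ := 1/2 + y*I with hzdef
  have hconj : (starRingEnd ℂ) z = 1 - z := by
    apply Complex.ext <;> simp [hzdef]; norm_num
  have refl := Complex.Gamma_mul_Gamma_one_sub z
  have h1 : Complex.Gamma (1 - z) = (starRingEnd ℂ) (Complex.Gamma z) := by
    rw [← hconj, Complex.Gamma_conj]
  rw [h1] at refl
  have h2 : (Real.pi : ℂ) * z = ↑(Real.pi * y) * I + ↑Real.pi / 2 := by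
    push_cast [hzdef]; ring
  have h3 : Complex.sin ((Real.pi : ℂ) * z) = (Real.cosh (Real.pi * y) : ℂ) := by
    rw [h2, Complex.sin_add_pi_div_two, Complex.cos_mul_I, Complex.ofReal_cosh]
  have := congrArg norm refl
  rw [norm_mul, RCLike.norm_conj, h3] at this
  rw [this, norm_div, Complex.norm_real, Complex.norm_real, Real.norm_eq_abs,
    Real.norm_eq_abs, abs_of_pos Real.pi_pos, abs_of_pos (Real.cosh_pos _)]
open Complex in
lemma st10_line_half_bound (y : ℝ) :
    ‖Complex.Gamma (1/2 + y*I)‖ ≤ Real.sqrt (2*Real.pi) * Real.exp (-Real.pi*|y|/2) := by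
  have key : ‖Complex.Gamma (1/2 + y*I)‖ * ‖Complex.Gamma (1/2 + y*I)‖
      ≤ (Real.sqrt (2*Real.pi) * Real.exp (-Real.pi*|y|/2)) *
        (Real.sqrt (2*Real.pi) * Real.exp (-Real.pi*|y|/2)) := by
    rw [st10_line_half]
    have h1 : Real.exp |Real.pi * y| ≤ 2 * Real.cosh (Real.pi * y) := by
      rw [Real.cosh_eq]; have := Real.exp_abs_le (Real.pi * y); linarith
    have habs : |Real.pi * y| = Real.pi * |y| := by
      rw [abs_mul, abs_of_pos Real.pi_pos]
    have hrhs : (Real.sqrt (2*Real.pi) * Real.exp (-Real.pi*|y|/2)) *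
        (Real.sqrt (2*Real.pi) * Real.exp (-Real.pi*|y|/2))
        = 2*Real.pi * Real.exp (-(Real.pi*|y|)) := by
      rw [show (Real.sqrt (2*Real.pi) * Real.exp (-Real.pi*|y|/2)) *
        (Real.sqrt (2*Real.pi) * Real.exp (-Real.pi*|y|/2))
        = (Real.sqrt (2*Real.pi) * Real.sqrt (2*Real.pi)) *
          (Real.exp (-Real.pi*|y|/2) * Real.exp (-Real.pi*|y|/2)) by ring,
        Real.mul_self_sqrt (by positivity), ← Real.exp_add]
      ring_nf
    rw [hrhs]
    rw [div_le_iff₀ (Real.cosh_pos _)]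
    have h2 : Real.exp (-(Real.pi * |y|)) * Real.exp (Real.pi * |y|) = 1 := by
      rw [← Real.exp_add]; simp
    have h3 : Real.exp (Real.pi*|y|) ≤ 2 * Real.cosh (Real.pi * y) := by
      rw [← habs]; exact h1
    nlinarith [Real.exp_pos (-(Real.pi*|y|)), Real.cosh_pos (Real.pi*y), Real.pi_pos]
  nlinarith [norm_nonneg (Complex.Gamma (1/2 + y*I)),
    mul_nonneg (Real.sqrt_nonneg (2*Real.pi)) (Real.exp_pos (-Real.pi*|y|/2)).le]

open Complex in
lemma st10_line_three_half (y : ℝ) :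
    Complex.Gamma (3/2 + y*I) = (1/2 + y*I) * Complex.Gamma (1/2 + y*I) := by
  have hz : (1/2 + y*I : ℂ) ≠ 0 := by
    intro h
    have := congrArg Complex.re h
    simp at this
  have := Complex.Gamma_add_one _ hz
  rw [show (1/2 + y*I + 1 : ℂ) = 3/2 + y*I by ring] at this
  exact this

open Complex in
lemma st10_normF (z : ℂ) :
    ‖Complex.Gamma z * Complex.exp ((↑(1/2:ℝ) - z) * Complex.log z)‖
      = ‖Complex.Gamma z‖ *
        Real.exp ((1/2 - z.re) * Real.log (‖z‖) + z.im * Complex.arg z) := by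
  rw [norm_mul, Complex.norm_exp]
  congr 2
  simp [Complex.mul_re, Complex.sub_re, Complex.sub_im, Complex.log_re, Complex.log_im]

open Complex in
lemma st10_argU (z : ℂ) (h : 0 ≤ z.re) : z.im * Complex.arg z ≤ Real.pi * |z.im| / 2 := by
  have h1 : |Complex.arg z| ≤ Real.pi/2 := Complex.abs_arg_le_pi_div_two_iff.mpr h
  calc z.im * Complex.arg z ≤ |z.im * Complex.arg z| := le_abs_self _
    _ = |z.im| * |Complex.arg z| := abs_mul _ _
    _ ≤ |z.im| * (Real.pi/2) := mul_le_mul_of_nonneg_left h1 (abs_nonneg _)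
    _ = Real.pi * |z.im| / 2 := by ring

open Complex in
lemma st10_argL (z : ℂ) (h : 0 < z.re) :
    Real.pi*|z.im|/2 - Real.pi/2 * z.re ≤ z.im * Complex.arg z := by
  have hz : z ≠ 0 := fun h0 => by rw [h0] at h; simp at h
  have habs : 0 < ‖z‖ := norm_pos_iff.mpr hz
  have hargle : |Complex.arg z| ≤ Real.pi/2 := Complex.abs_arg_le_pi_div_two_iff.mpr h.le
  have hsign : z.im * Complex.arg z = |z.im| * |Complex.arg z| := by
    rcases le_or_gt 0 z.im with hy | hy
    · rw [_root_.abs_of_nonneg hy, _root_.abs_of_nonneg (Complex.arg_nonneg_iff.mpr hy)]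
    · rw [_root_.abs_of_neg hy, _root_.abs_of_neg (Complex.arg_neg_iff.mpr hy)]; ring
  set θ := |Complex.arg z| with hθ
  have ht0 : 0 ≤ θ := abs_nonneg _
  have hcos : Real.cos θ = z.re / ‖z‖ := by
    rw [hθ, Real.cos_abs, Complex.cos_arg hz]
  have jordan : 2/Real.pi * (Real.pi/2 - θ) ≤ Real.sin (Real.pi/2 - θ) :=
    Real.mul_le_sin (by linarith) (by linarith)
  rw [Real.sin_pi_div_two_sub, hcos] at jordan
  have h7 : 0 ≤ Real.pi/2 - θ := by linarith
  have e2 : Real.pi/2 - θ ≤ Real.pi/2 * (z.re / ‖z‖) := by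
    have h' := mul_le_mul_of_nonneg_left jordan (show (0:ℝ) ≤ Real.pi/2 by positivity)
    have hc : Real.pi/2 * (2/Real.pi * (Real.pi/2 - θ)) = Real.pi/2 - θ := by
      field_simp
    rw [hc] at h'
    exact h'
  have h6 : |z.im| ≤ ‖z‖ := Complex.abs_im_le_norm z
  have e1 : |z.im| * (Real.pi/2 - θ) ≤ ‖z‖ * (Real.pi/2 - θ) :=
    mul_le_mul_of_nonneg_right h6 h7
  have e3 : ‖z‖ * (Real.pi/2 * (z.re / ‖z‖)) = Real.pi/2 * z.re := by
    field_simp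
  rw [hsign]
  nlinarith [mul_le_mul_of_nonneg_left e2 habs.le]
noncomputable def st10C0 : ℝ := Real.sqrt (2*Real.pi) * (3/2) * Real.exp (3*Real.pi/4)

open Complex in
lemma st10_core (x y : ℝ) (hx1 : 1/2 ≤ x) (hx2 : x ≤ 3/2) :
    ‖Complex.Gamma (↑x + ↑y*I)‖
      ≤ st10C0 * Real.exp (-Real.pi*|y|/2) * (1+2*|y|)^(x-1/2) := by
  have hS : (0:ℝ) < Real.sqrt (2*Real.pi) := Real.sqrt_pos.mpr (by positivity)
  -- Phragmén–Lindelöf step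
  have hPL : ∀ w : ℂ, 1/2 ≤ w.re → w.re ≤ 3/2 →
      ‖Complex.Gamma w * Complex.exp ((↑(1/2:ℝ) - w) * Complex.log w)‖
        ≤ Real.sqrt (2*Real.pi) := by
    intro w h1 h2
    have hdiff : ∀ w : ℂ, 0 < w.re →
        DifferentiableAt ℂ
          (fun z => Complex.Gamma z * Complex.exp ((↑(1/2:ℝ) - z) * Complex.log z)) w := by
      intro w hw
      have hslit : w ∈ Complex.slitPlane := Or.inl hw
      have hG : DifferentiableAt ℂ Complex.Gamma w := by
        refine Complex.differentiableAt_Gamma w fun m hm => ?_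
        have := congrArg Complex.re hm
        simp at this
        rw [this] at hw
        have : (0:ℝ) ≤ (m:ℝ) := m.cast_nonneg
        linarith
      exact hG.mul ((((differentiableAt_const _).sub differentiableAt_id).mul
        (Complex.differentiableAt_log hslit)).cexp)
    refine PhragmenLindelof.vertical_strip
      (f := fun z => Complex.Gamma z * Complex.exp ((↑(1/2:ℝ) - z) * Complex.log z))
      (a := (1:ℝ)/2) (b := (3:ℝ)/2) ?_ ?_ ?_ ?_ h1 h2
    · constructor
      · exact fun w hw => (hdiff w (by have := hw.1; norm_num at this ⊢; linarith)).differentiableWithinAt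
      · refine continuousOn_of_forall_continuousAt fun w hw => (hdiff w ?_).continuousAt
        have h3 := (Complex.continuous_re.closure_preimage_subset _) hw
        rw [closure_Ioo (by norm_num : (1:ℝ)/2 ≠ 3/2)] at h3
        have := h3.1; norm_num at this ⊢; linarith
    · -- growth bound
      refine ⟨1, by rw [show (3:ℝ)/2 - 1/2 = 1 by norm_num, div_one]; linarith [Real.pi_gt_three],
        Real.pi/2, ?_⟩
      rw [Asymptotics.isBigO_iff]
      refine ⟨2*(Real.Gamma (1/2) + Real.Gamma (3/2)), ?_⟩
      rw [Filter.eventually_inf_principal]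
      refine Filter.Eventually.of_forall fun w hw => ?_
      have hw1 : (1:ℝ)/2 < w.re := hw.1
      have hw2 : w.re < 3/2 := hw.2
      have hG0 : (0:ℝ) < Real.Gamma (1/2) + Real.Gamma (3/2) :=
        add_pos (Real.Gamma_pos_of_pos (by norm_num)) (Real.Gamma_pos_of_pos (by norm_num))
      have hΓb : ‖Complex.Gamma w‖ ≤ Real.Gamma (1/2) + Real.Gamma (3/2) :=
        (st10_norm_Gamma_le w (by linarith)).trans (st10_realGamma_bdd hw1.le hw2.le)
      have habsw : (1:ℝ)/2 ≤ ‖w‖ :=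
        le_trans (by linarith [le_abs_self w.re]) (Complex.abs_re_le_norm w)
      have hlog : -Real.log 2 ≤ Real.log (‖w‖) := by
        have h' := Real.log_le_log (by norm_num : (0:ℝ) < 1/2) habsw
        rw [show (1:ℝ)/2 = 2⁻¹ by norm_num, Real.log_inv] at h'
        exact h'
      have hlog2 : (0:ℝ) < Real.log 2 := Real.log_pos (by norm_num)
      have hexp1 : (1/2 - w.re) * Real.log (‖w‖) ≤ Real.log 2 := by
        have hc : 1/2 - w.re ≤ 0 := by linarith
        have h' := mul_le_mul_of_nonpos_left hlog hc
        nlinarith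
      have harg : w.im * Complex.arg w ≤ Real.pi * |w.im|/2 := st10_argU w (by linarith)
      have hyexp : |w.im| ≤ Real.exp |w.im| := by
        linarith [Real.add_one_le_exp |w.im|]
      rw [st10_normF w]
      have hstep : ‖Complex.Gamma w‖ *
          Real.exp ((1/2 - w.re) * Real.log (‖w‖) + w.im * Complex.arg w)
          ≤ (Real.Gamma (1/2) + Real.Gamma (3/2)) * Real.exp (Real.log 2 + Real.pi * |w.im|/2) :=
        mul_le_mul hΓb (Real.exp_le_exp.mpr (by linarith)) (Real.exp_pos _).le hG0.le
      refine hstep.trans ?_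
      rw [Real.exp_add, Real.exp_log (by norm_num : (0:ℝ) < 2)]
      rw [Real.norm_eq_abs, abs_of_pos (Real.exp_pos _)]
      rw [show (Real.Gamma (1/2) + Real.Gamma (3/2)) * (2 * Real.exp (Real.pi * |w.im|/2))
        = 2*(Real.Gamma (1/2) + Real.Gamma (3/2)) * Real.exp (Real.pi * |w.im|/2) by ring]
      refine mul_le_mul_of_nonneg_left (Real.exp_le_exp.mpr ?_) (by linarith)
      rw [one_mul]
      nlinarith [Real.pi_pos]
    · -- left boundary
      intro w hw
      rw [st10_normF w, hw]
      simp only [sub_self, zero_mul, zero_add]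
      have hwz : w = (1/2 : ℂ) + (w.im : ℂ)*Complex.I := by
        apply Complex.ext <;> simp [hw] <;> norm_num
      have h1' : ‖Complex.Gamma w‖ ≤ Real.sqrt (2*Real.pi) * Real.exp (-Real.pi*|w.im|/2) := by
        conv_lhs => rw [hwz]
        exact st10_line_half_bound w.im
      have h2' : w.im * Complex.arg w ≤ Real.pi * |w.im|/2 := st10_argU w (by rw [hw]; norm_num)
      calc ‖Complex.Gamma w‖ * Real.exp (w.im * Complex.arg w)
          ≤ (Real.sqrt (2*Real.pi) * Real.exp (-Real.pi*|w.im|/2)) * Real.exp (Real.pi*|w.im|/2) :=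
            mul_le_mul h1' (Real.exp_le_exp.mpr (by linarith)) (Real.exp_pos _).le (by positivity)
        _ = Real.sqrt (2*Real.pi) := by
            rw [mul_assoc, ← Real.exp_add]
            rw [show -Real.pi*|w.im|/2 + Real.pi*|w.im|/2 = 0 by ring, Real.exp_zero, mul_one]
    · -- right boundary
      intro w hw
      rw [st10_normF w, hw]
      have hwz : w = (3/2 : ℂ) + (w.im : ℂ)*Complex.I := by
        apply Complex.ext <;> simp [hw] <;> norm_num
      have hw0 : w ≠ 0 := by
        intro h; rw [h] at hw; simp at hw; norm_num at hw
      have habsw : 0 < ‖w‖ := norm_pos_iff.mpr hw0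
      have hΓ : ‖Complex.Gamma w‖
          = ‖(1/2 + (w.im:ℂ)*Complex.I : ℂ)‖ * ‖Complex.Gamma (1/2 + (w.im:ℂ)*Complex.I)‖ := by
        conv_lhs => rw [hwz]
        rw [st10_line_three_half, norm_mul]
      have hle : ‖(1/2 + (w.im:ℂ)*Complex.I : ℂ)‖ ≤ ‖w‖ := by
        conv_rhs => rw [hwz]
        rw [Complex.norm_def, Complex.norm_def]
        refine Real.sqrt_le_sqrt ?_
        rw [Complex.normSq_apply, Complex.normSq_apply]
        simp
        nlinarith [sq_nonneg w.im]
      have harg : w.im * Complex.arg w ≤ Real.pi * |w.im|/2 := st10_argU w (by rw [hw]; norm_num)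
      have hkey : ‖Complex.Gamma w‖ *
          Real.exp ((1/2 - 3/2) * Real.log (‖w‖) + w.im * Complex.arg w)
          = ‖(1/2 + (w.im:ℂ)*Complex.I : ℂ)‖ * ‖Complex.Gamma (1/2 + (w.im:ℂ)*Complex.I)‖
            * Real.exp (w.im * Complex.arg w) / ‖w‖ := by
        rw [hΓ, show ((1:ℝ)/2 - 3/2) = -1 by norm_num]
        rw [show (-1 : ℝ) * Real.log (‖w‖) + w.im * Complex.arg w
          = w.im * Complex.arg w - Real.log (‖w‖) by ring]
        rw [Real.exp_sub, Real.exp_log habsw]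
        ring
      rw [hkey, div_le_iff₀ habsw]
      have h1' := st10_line_half_bound w.im
      calc ‖(1/2 + (w.im:ℂ)*Complex.I : ℂ)‖ * ‖Complex.Gamma (1/2 + (w.im:ℂ)*Complex.I)‖
            * Real.exp (w.im * Complex.arg w)
          ≤ ‖w‖ * (Real.sqrt (2*Real.pi) * Real.exp (-Real.pi*|w.im|/2))
            * Real.exp (Real.pi*|w.im|/2) := by
            gcongr
        _ = Real.sqrt (2*Real.pi) * ‖w‖ := by
            rw [show ‖w‖ * (Real.sqrt (2*Real.pi) * Real.exp (-Real.pi*|w.im|/2))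
              * Real.exp (Real.pi*|w.im|/2) = Real.sqrt (2*Real.pi) * ‖w‖
                * (Real.exp (-Real.pi*|w.im|/2) * Real.exp (Real.pi*|w.im|/2)) by ring,
              ← Real.exp_add, show -Real.pi*|w.im|/2 + Real.pi*|w.im|/2 = 0 by ring,
              Real.exp_zero, mul_one]
  -- now recover the Gamma bound
  set z : ℂ := ↑x + ↑y*I with hzdef
  have hre : z.re = x := by simp [hzdef]
  have him : z.im = y := by simp [hzdef]
  have hrepos : 0 < z.re := by rw [hre]; linarith
  have hz0 : z ≠ 0 := by intro h; rw [h] at hrepos; simp at hrepos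
  have habs : 0 < ‖z‖ := norm_pos_iff.mpr hz0
  have hF := hPL z (by rw [hre]; exact hx1) (by rw [hre]; exact hx2)
  rw [st10_normF z, hre, him] at hF
  have h1 : ‖Complex.Gamma z‖
      ≤ Real.sqrt (2*Real.pi) * Real.exp ((x - 1/2)*Real.log (‖z‖) - y*Complex.arg z) := by
    have h' := mul_le_mul_of_nonneg_right hF
      (Real.exp_pos (-((1/2 - x) * Real.log (‖z‖) + y * Complex.arg z))).le
    rw [mul_assoc, ← Real.exp_add, add_neg_cancel, Real.exp_zero, mul_one] at h'
    rw [show (x - 1/2)*Real.log (‖z‖) - y*Complex.arg z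
      = -((1/2 - x) * Real.log (‖z‖) + y * Complex.arg z) by ring]
    exact h'
  have hL : Real.exp ((x - 1/2)*Real.log (‖z‖)) = ‖z‖ ^ (x - 1/2) := by
    rw [Real.rpow_def_of_pos habs, mul_comm]
  have hzb : ‖z‖ ≤ 3/2*(1+2*|y|) := by
    have h2 := Complex.norm_le_abs_re_add_abs_im z
    rw [hre, him, _root_.abs_of_nonneg (by linarith : (0:ℝ) ≤ x)] at h2
    linarith [abs_nonneg y]
  have hpow : ‖z‖ ^ (x-1/2) ≤ (3/2) * (1+2*|y|)^(x-1/2) := by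
    have e0 : (0:ℝ) ≤ x - 1/2 := by linarith
    calc ‖z‖ ^ (x-1/2) ≤ (3/2*(1+2*|y|))^(x-1/2) :=
          Real.rpow_le_rpow habs.le hzb e0
      _ = (3/2:ℝ)^(x-1/2) * (1+2*|y|)^(x-1/2) := Real.mul_rpow (by norm_num) (by positivity)
      _ ≤ (3/2) * (1+2*|y|)^(x-1/2) := by
          have h3 : ((3:ℝ)/2)^(x-1/2) ≤ ((3:ℝ)/2)^(1:ℝ) :=
            Real.rpow_le_rpow_of_exponent_le (by norm_num) (by linarith)
          rw [Real.rpow_one] at h3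
          exact mul_le_mul_of_nonneg_right h3 (Real.rpow_nonneg (by positivity) _)
  have hargl := st10_argL z hrepos
  rw [him] at hargl
  have h4 : -(y * Complex.arg z) ≤ -Real.pi*|y|/2 + 3*Real.pi/4 := by
    nlinarith [Real.pi_pos]
  calc ‖Complex.Gamma z‖
      ≤ Real.sqrt (2*Real.pi) * Real.exp ((x - 1/2)*Real.log (‖z‖) - y*Complex.arg z) := h1
    _ = Real.sqrt (2*Real.pi) * (‖z‖ ^ (x-1/2) * Real.exp (-(y*Complex.arg z))) := by
        rw [show (x - 1/2)*Real.log (‖z‖) - y*Complex.arg z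
          = (x - 1/2)*Real.log (‖z‖) + -(y*Complex.arg z) by ring,
          Real.exp_add, hL]
    _ ≤ Real.sqrt (2*Real.pi) * (((3/2) * (1+2*|y|)^(x-1/2))
        * Real.exp (-Real.pi*|y|/2 + 3*Real.pi/4)) := by
        refine mul_le_mul_of_nonneg_left ?_ hS.le
        exact mul_le_mul hpow (Real.exp_le_exp.mpr h4) (Real.exp_pos _).le (by positivity)
    _ = st10C0 * Real.exp (-Real.pi*|y|/2) * (1+2*|y|)^(x-1/2) := by
        rw [st10C0, Real.exp_add]
        ring

open Complex in
lemma st10_down (n : ℕ) : ∃ C : ℝ, 0 < C ∧ ∀ x y : ℝ, 1/2 - n ≤ x → x ≤ 3/2 → 1/2 ≤ |y| →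
    ‖Complex.Gamma (↑x + ↑y*I)‖ ≤ C * Real.exp (-Real.pi*|y|/2) * (1+2*|y|)^(x-1/2) := by
  have hC0 : 0 < st10C0 := by
    rw [st10C0]
    have := Real.sqrt_pos.mpr (show (0:ℝ) < 2*Real.pi by positivity)
    positivity
  induction n with
  | zero =>
    exact ⟨st10C0, hC0, fun x y h1 h2 _ => st10_core x y (by simpa using h1) h2⟩
  | succ n ih =>
    obtain ⟨C, hC, hbound⟩ := ih
    refine ⟨4*C, by linarith, fun x y h1 h2 hy => ?_⟩
    by_cases hcase : 1/2 - n ≤ x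
    · have hb := hbound x y hcase h2 hy
      nlinarith [norm_nonneg (Complex.Gamma (↑x + ↑y*I)), Real.exp_pos (-Real.pi*|y|/2),
        Real.rpow_nonneg (show (0:ℝ) ≤ 1+2*|y| by positivity) (x-1/2),
        mul_pos (Real.exp_pos (-Real.pi*|y|/2))
          (Real.rpow_pos_of_pos (show (0:ℝ) < 1+2*|y| by positivity) (x-1/2))]
    · push_neg at hcase
      have hx1 : 1/2 - (n:ℝ) ≤ x + 1 := by push_cast at h1 ⊢; linarith
      have hx2 : x + 1 ≤ 3/2 := by linarith [Nat.cast_nonneg (α := ℝ) n]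
      have hy0 : y ≠ 0 := by
        intro h; rw [h] at hy; simp at hy; linarith
      have hz0 : (↑x + ↑y*I : ℂ) ≠ 0 := by
        intro h; have := congrArg Complex.im h; simp at this; exact hy0 this
      have hrec := Complex.Gamma_add_one _ hz0
      have hE : ((↑(x+1) : ℂ) + ↑y*I) = (↑x + ↑y*I) + 1 := by push_cast; ring
      have hb := hbound (x+1) y hx1 hx2 hy
      rw [hE, hrec, norm_mul] at hb
      have hρ : (0:ℝ) < 1 + 2*|y| := by positivity
      have hsplit : (1+2*|y|)^(x+1-1/2) = (1+2*|y|)^(x-1/2) * (1+2*|y|) := by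
        rw [show x+1-1/2 = (x-1/2) + 1 by ring, Real.rpow_add hρ, Real.rpow_one]
      rw [hsplit] at hb
      have habs : |y| ≤ ‖(↑x + ↑y*I : ℂ)‖ := by
        have := Complex.abs_im_le_norm (↑x + ↑y*I)
        simpa using this
      have habs0 : 0 < ‖(↑x + ↑y*I : ℂ)‖ := norm_pos_iff.mpr hz0
      rw [← mul_le_mul_iff_of_pos_right habs0]
      calc ‖Complex.Gamma (↑x + ↑y*I)‖ * ‖(↑x + ↑y*I : ℂ)‖
          ≤ C * Real.exp (-Real.pi*|y|/2) * ((1+2*|y|)^(x-1/2) * (1+2*|y|)) := by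
            rw [mul_comm]; exact hb
        _ ≤ C * Real.exp (-Real.pi*|y|/2) * ((1+2*|y|)^(x-1/2) * (4*‖(↑x + ↑y*I : ℂ)‖)) := by
            gcongr
            linarith
        _ = 4*C * Real.exp (-Real.pi*|y|/2) * (1+2*|y|)^(x-1/2) * ‖(↑x + ↑y*I : ℂ)‖ := by
            ring

open Complex in
lemma st10_up (n : ℕ) : ∃ C : ℝ, 0 < C ∧ ∀ x y : ℝ, 1/2 ≤ x → x ≤ 3/2 + n → 1/2 ≤ |y| →
    ‖Complex.Gamma (↑x + ↑y*I)‖ ≤ C * Real.exp (-Real.pi*|y|/2) * (1+2*|y|)^(x-1/2) := by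
  have hC0 : 0 < st10C0 := by
    rw [st10C0]
    have := Real.sqrt_pos.mpr (show (0:ℝ) < 2*Real.pi by positivity)
    positivity
  induction n with
  | zero =>
    exact ⟨st10C0, hC0, fun x y h1 h2 _ => st10_core x y h1 (by simpa using h2)⟩
  | succ n ih =>
    obtain ⟨C, hC, hbound⟩ := ih
    have hn : (0:ℝ) ≤ n := Nat.cast_nonneg n
    refine ⟨((n:ℝ)+2)*C, by nlinarith, fun x y h1 h2 hy => ?_⟩
    by_cases hcase : x ≤ 3/2 + n
    · have hb := hbound x y h1 hcase hy
      nlinarith [norm_nonneg (Complex.Gamma (↑x + ↑y*I)),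
        mul_pos (Real.exp_pos (-Real.pi*|y|/2))
          (Real.rpow_pos_of_pos (show (0:ℝ) < 1+2*|y| by positivity) (x-1/2))]
    · push_neg at hcase
      have hx1 : 1/2 ≤ x - 1 := by linarith
      have hx2 : x - 1 ≤ 3/2 + n := by push_cast at h2 ⊢; linarith
      have hz0 : ((↑(x-1) : ℂ) + ↑y*I) ≠ 0 := by
        intro h; have := congrArg Complex.re h; simp at this; linarith
      have hrec := Complex.Gamma_add_one _ hz0
      have hE : ((↑(x-1) : ℂ) + ↑y*I) + 1 = (↑x + ↑y*I) := by push_cast; ring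
      rw [hE] at hrec
      have hb := hbound (x-1) y hx1 hx2 hy
      have hρ : (0:ℝ) < 1 + 2*|y| := by positivity
      have hsplit : (1+2*|y|)^(x-1/2) = (1+2*|y|)^(x-1-1/2) * (1+2*|y|) := by
        rw [show x-1/2 = (x-1-1/2) + 1 by ring, Real.rpow_add hρ, Real.rpow_one]
      have habs : ‖((↑(x-1) : ℂ) + ↑y*I)‖ ≤ ((n:ℝ)+2) * (1+2*|y|) := by
        have h3 := Complex.norm_le_abs_re_add_abs_im ((↑(x-1) : ℂ) + ↑y*I)
        have hre : ((↑(x-1) : ℂ) + ↑y*I).re = x - 1 := by simp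
        have him : ((↑(x-1) : ℂ) + ↑y*I).im = y := by simp
        rw [hre, him, _root_.abs_of_nonneg (by linarith : (0:ℝ) ≤ x - 1)] at h3
        have : x - 1 + |y| ≤ ((n:ℝ)+2) * (1+2*|y|) := by nlinarith [abs_nonneg y]
        linarith
      rw [hrec, norm_mul]
      calc ‖((↑(x-1) : ℂ) + ↑y*I)‖ * ‖Complex.Gamma ((↑(x-1) : ℂ) + ↑y*I)‖
          ≤ (((n:ℝ)+2) * (1+2*|y|)) *
            (C * Real.exp (-Real.pi*|y|/2) * (1+2*|y|)^(x-1-1/2)) := by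
            refine mul_le_mul habs hb (norm_nonneg _) (by positivity)
        _ = ((n:ℝ)+2)*C * Real.exp (-Real.pi*|y|/2) * ((1+2*|y|)^(x-1-1/2) * (1+2*|y|)) := by
            ring
        _ = ((n:ℝ)+2)*C * Real.exp (-Real.pi*|y|/2) * (1+2*|y|)^(x-1/2) := by
            rw [← hsplit]

open Complex in
lemma st10_key (a : ℝ) (ha : 1 ≤ a) : ∃ C : ℝ, 0 < C ∧ ∀ x y : ℝ, |x| ≤ a → 1/2 ≤ |y| →
    ‖Complex.Gamma (↑x + ↑y*I)‖ ≤ C * Real.exp (-Real.pi*|y|/2) * (1+2*|y|)^(x-1/2) := by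
  obtain ⟨C1, hC1, h1⟩ := st10_down (⌈a⌉₊ + 1)
  obtain ⟨C2, hC2, h2⟩ := st10_up (⌈a⌉₊ + 1)
  have hn : a ≤ (⌈a⌉₊ : ℝ) := Nat.le_ceil a
  have hcast : ((⌈a⌉₊ + 1 : ℕ) : ℝ) = (⌈a⌉₊ : ℝ) + 1 := by push_cast; ring
  rw [hcast] at h1 h2
  refine ⟨max C1 C2, lt_max_of_lt_left hC1, fun x y hx hy => ?_⟩
  have hx1 : -a ≤ x := neg_le_of_abs_le hx
  have hx2 : x ≤ a := le_of_abs_le hx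
  have hval : (0:ℝ) ≤ Real.exp (-Real.pi*|y|/2) * (1+2*|y|)^(x-1/2) := by positivity
  rcases le_or_gt x (3/2) with h | h
  · have := h1 x y (by linarith) h hy
    calc ‖Complex.Gamma (↑x + ↑y*I)‖
        ≤ C1 * Real.exp (-Real.pi*|y|/2) * (1+2*|y|)^(x-1/2) := this
      _ ≤ max C1 C2 * Real.exp (-Real.pi*|y|/2) * (1+2*|y|)^(x-1/2) := by
          rw [mul_assoc, mul_assoc]
          exact mul_le_mul_of_nonneg_right (le_max_left _ _) hval
  · have := h2 x y (by linarith) (by linarith) hy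
    calc ‖Complex.Gamma (↑x + ↑y*I)‖
        ≤ C2 * Real.exp (-Real.pi*|y|/2) * (1+2*|y|)^(x-1/2) := this
      _ ≤ max C1 C2 * Real.exp (-Real.pi*|y|/2) * (1+2*|y|)^(x-1/2) := by
          rw [mul_assoc, mul_assoc]
          exact mul_le_mul_of_nonneg_right (le_max_right _ _) hval
open Complex

/-- Stirling-type bound for B(s,μ) = Γ((s−1/2+iμ)/2)·Γ((s−1/2−iμ)/2)·cosh(πμ/2). -/
theorem stmt10 (a : ℝ) (ha : 1 ≤ a) :
    ∃ C : ℝ, 0 < C ∧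
      ∀ u v μ : ℝ, |u| ≤ a → 1 ≤ |v + μ| → 1 ≤ |v - μ| →
        ‖Complex.Gamma (((u : ℂ) + (v : ℂ) * Complex.I - 1 / 2 + (μ : ℂ) * Complex.I) / 2)‖ *
            ‖Complex.Gamma (((u : ℂ) + (v : ℂ) * Complex.I - 1 / 2 - (μ : ℂ) * Complex.I) / 2)‖ *
            Real.cosh (Real.pi * μ / 2) ≤
          C * Real.exp (-(Real.pi / 2) * max (|v| - |μ|) 0) *
            (1 + |μ + v|) ^ (u / 2 - 3 / 4) * (1 + |μ - v|) ^ (u / 2 - 3 / 4) := by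
  obtain ⟨C, hC, hkey⟩ := st10_key a ha
  refine ⟨C*C, mul_pos hC hC, fun u v μ hu h1 h2 => ?_⟩
  set x : ℝ := (u - 1/2)/2 with hxdef
  set y1 : ℝ := (v + μ)/2 with hy1def
  set y2 : ℝ := (v - μ)/2 with hy2def
  have hz1 : ((u : ℂ) + (v : ℂ) * Complex.I - 1 / 2 + (μ : ℂ) * Complex.I) / 2
      = (x : ℂ) + (y1 : ℂ) * Complex.I := by
    rw [hxdef, hy1def]; push_cast; ring
  have hz2 : ((u : ℂ) + (v : ℂ) * Complex.I - 1 / 2 - (μ : ℂ) * Complex.I) / 2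
      = (x : ℂ) + (y2 : ℂ) * Complex.I := by
    rw [hxdef, hy2def]; push_cast; ring
  have hy1e : |y1| = |v + μ|/2 := by rw [hy1def, abs_div]; norm_num
  have hy2e : |y2| = |v - μ|/2 := by rw [hy2def, abs_div]; norm_num
  have hxa : |x| ≤ a := by
    have h0 : |x| = |u - 1/2|/2 := by rw [hxdef, abs_div]; norm_num
    rw [h0]
    rcases abs_cases (u - 1/2) with ⟨e1, _⟩ | ⟨e1, _⟩ <;>
      [linarith [le_abs_self u]; linarith [neg_abs_le u]]
  have hy1h : 1/2 ≤ |y1| := by rw [hy1e]; linarith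
  have hy2h : 1/2 ≤ |y2| := by rw [hy2e]; linarith
  have hb1 := hkey x y1 hxa hy1h
  have hb2 := hkey x y2 hxa hy2h
  rw [← hz1] at hb1
  rw [← hz2] at hb2
  -- cosh bound
  have hπ := Real.pi_pos
  have hcosh : Real.cosh (Real.pi * μ / 2) ≤ Real.exp (Real.pi * |μ| / 2) := by
    rw [Real.cosh_eq]
    have a1 : Real.pi * μ / 2 ≤ Real.pi * |μ| / 2 := by
      nlinarith [le_abs_self μ]
    have a2 : -(Real.pi * μ / 2) ≤ Real.pi * |μ| / 2 := by
      nlinarith [neg_abs_le μ]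
    have b1 := Real.exp_le_exp.mpr a1
    have b2 := Real.exp_le_exp.mpr a2
    linarith
  -- exponential identity
  have hmax : |v + μ| + |v - μ| = 2 * max |v| |μ| := by
    have hub : |v + μ| + |v - μ| ≤ 2 * max |v| |μ| := by
      rcases abs_cases (v+μ) with ⟨e1, _⟩ | ⟨e1, _⟩ <;>
        rcases abs_cases (v-μ) with ⟨e2, _⟩ | ⟨e2, _⟩ <;>
        rw [e1, e2] <;>
        linarith [le_abs_self v, neg_abs_le v, le_abs_self μ, neg_abs_le μ,
          le_max_left |v| |μ|, le_max_right |v| |μ|]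
    have hlb : 2 * max |v| |μ| ≤ |v + μ| + |v - μ| := by
      have t1 := abs_add_le (v+μ) (v-μ)
      rw [show v+μ+(v-μ) = 2*v by ring] at t1
      have h2v : |2*v| = 2*|v| := by rw [abs_mul]; norm_num
      have t2 := abs_add_le (v+μ) (μ-v)
      rw [show v+μ+(μ-v) = 2*μ by ring, abs_sub_comm μ v] at t2
      have h2m : |2*μ| = 2*|μ| := by rw [abs_mul]; norm_num
      rcases max_cases |v| |μ| with ⟨e5, _⟩ | ⟨e5, _⟩ <;> rw [e5] <;> linarith
    linarith
  have hmax2 : max (|v| - |μ|) 0 = max |v| |μ| - |μ| := by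
    rcases max_cases (|v| - |μ|) 0 with ⟨e1, e1'⟩ | ⟨e1, e1'⟩ <;>
      rcases max_cases |v| |μ| with ⟨e3, e3'⟩ | ⟨e3, e3'⟩ <;> linarith
  have hexp : Real.exp (-Real.pi*|y1|/2) * Real.exp (-Real.pi*|y2|/2) *
      Real.exp (Real.pi*|μ|/2) = Real.exp (-(Real.pi / 2) * max (|v| - |μ|) 0) := by
    rw [← Real.exp_add, ← Real.exp_add]
    congr 1
    have hmax' : max |v| |μ| = (|v + μ| + |v - μ|)/2 := by linarith
    rw [hy1e, hy2e, hmax2, hmax']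
    ring
  -- power factors
  have e2 : x - 1/2 = u/2 - 3/4 := by rw [hxdef]; ring
  have hP1 : (1+2*|y1|)^(x-1/2) = (1 + |μ + v|) ^ (u / 2 - 3 / 4) := by
    rw [hy1e, e2, add_comm μ v]
    congr 1
    ring
  have hP2 : (1+2*|y2|)^(x-1/2) = (1 + |μ - v|) ^ (u / 2 - 3 / 4) := by
    rw [hy2e, e2, abs_sub_comm μ v]
    congr 1
    ring
  rw [hP1] at hb1
  rw [hP2] at hb2
  have hpos1 : (0:ℝ) ≤ C * Real.exp (-Real.pi*|y1|/2) * (1 + |μ + v|) ^ (u / 2 - 3 / 4) := by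
    have : (0:ℝ) < 1 + |μ + v| := by positivity
    positivity
  calc ‖Complex.Gamma (((u : ℂ) + (v : ℂ) * Complex.I - 1 / 2 + (μ : ℂ) * Complex.I) / 2)‖ *
        ‖Complex.Gamma (((u : ℂ) + (v : ℂ) * Complex.I - 1 / 2 - (μ : ℂ) * Complex.I) / 2)‖ *
        Real.cosh (Real.pi * μ / 2)
      ≤ (C * Real.exp (-Real.pi*|y1|/2) * (1 + |μ + v|) ^ (u / 2 - 3 / 4)) *
        (C * Real.exp (-Real.pi*|y2|/2) * (1 + |μ - v|) ^ (u / 2 - 3 / 4)) *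
        Real.exp (Real.pi * |μ| / 2) := by
        refine mul_le_mul (mul_le_mul hb1 hb2 (norm_nonneg _) hpos1) hcosh
          (Real.cosh_pos _).le ?_
        have h3 : (0:ℝ) ≤ C * Real.exp (-Real.pi*|y2|/2) * (1 + |μ - v|) ^ (u / 2 - 3 / 4) := by
          have : (0:ℝ) < 1 + |μ - v| := by positivity
          positivity
        exact mul_nonneg hpos1 h3
    _ = C*C * (Real.exp (-Real.pi*|y1|/2) * Real.exp (-Real.pi*|y2|/2) *
          Real.exp (Real.pi*|μ|/2)) *
        (1 + |μ + v|) ^ (u / 2 - 3 / 4) * (1 + |μ - v|) ^ (u / 2 - 3 / 4) := by ring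
    _ = C*C * Real.exp (-(Real.pi / 2) * max (|v| - |μ|) 0) *
        (1 + |μ + v|) ^ (u / 2 - 3 / 4) * (1 + |μ - v|) ^ (u / 2 - 3 / 4) := by rw [hexp]
end

section
/- Let s ∈ ℂ with Re(s) > 0, let a ∈ ℂ, and let z be a real number with z < 1. Then ∫_{1/2}^{1} t^{s/2 − 1}·(1 − t)^{s/2 − 1}·(1 − t·z)^{−a} dt = (2^{2−s}/s)·(1 − z/2)^{−a} + (2/s)·(s/2 − 1)·∫_{1/2}^{1} (1 − t)^{s/2}·t^{s/2 − 2}·(1 − t·z)^{−a} dt + (2·a·z/s)·∫_{1/2}^{1} (1 − t)^{s/2}·t^{s/2 − 1}·(1 − t·z)^{−a−1} dt. -/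
open Complex Set MeasureTheory intervalIntegral

/-- Integration-by-parts identity for the Euler-type integral of the hypergeometric
function (Section 4.3 of the paper). -/
theorem stmt11 (s : ℂ) (hs : 0 < s.re) (a : ℂ) (z : ℝ) (hz : z < 1) :
    (∫ t in (1 / 2 : ℝ)..1, (t : ℂ) ^ (s / 2 - 1) * ((1 - t : ℝ) : ℂ) ^ (s / 2 - 1) *
        ((1 - t * z : ℝ) : ℂ) ^ (-a)) =
      (2 : ℂ) ^ (2 - s) / s * ((1 - z / 2 : ℝ) : ℂ) ^ (-a) +
        2 / s * (s / 2 - 1) *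
          (∫ t in (1 / 2 : ℝ)..1, ((1 - t : ℝ) : ℂ) ^ (s / 2) * (t : ℂ) ^ (s / 2 - 2) *
            ((1 - t * z : ℝ) : ℂ) ^ (-a)) +
        2 * a * (z : ℂ) / s *
          (∫ t in (1 / 2 : ℝ)..1, ((1 - t : ℝ) : ℂ) ^ (s / 2) * (t : ℂ) ^ (s / 2 - 1) *
            ((1 - t * z : ℝ) : ℂ) ^ (-a - 1)) := by
  have hs0 : s ≠ 0 := by intro h; rw [h] at hs; simp at hs
  have hs2 : 0 < (s / 2).re := by
    have : (s / 2).re = s.re / 2 := by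
      simp [Complex.div_re, Complex.normSq]
    rw [this]; positivity
  have hle : (1 / 2 : ℝ) ≤ 1 := by norm_num
  have hxz : ∀ x : ℝ, 1 / 2 ≤ x → x ≤ 1 → 0 < 1 - x * z := by
    intro x h1 h2
    rcases le_or_gt z 0 with hz0 | hz0
    · nlinarith
    · nlinarith
  -- continuity helpers on `Icc (1/2) 1`
  have c1 : ContinuousOn (fun t : ℝ => (1 - (t : ℂ)) ^ (s / 2)) (Icc (1 / 2 : ℝ) 1) := by
    apply continuousOn_of_forall_continuousAt
    intro x hx
    refine (continuousAt_cpow_const_of_re_pos (Or.inl ?_) hs2).comp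
      (continuous_const.sub continuous_ofReal).continuousAt
    rw [sub_re, one_re, ofReal_re, sub_nonneg]; exact hx.2
  have c2 : ∀ w : ℂ, ContinuousOn (fun t : ℝ => (t : ℂ) ^ w) (Icc (1 / 2 : ℝ) 1) := by
    intro w
    apply continuousOn_of_forall_continuousAt
    intro x hx
    exact (continuousAt_cpow_const
      (Complex.ofReal_mem_slitPlane.2 (by linarith [hx.1]))).comp
      continuous_ofReal.continuousAt
  have c3 : ∀ w : ℂ,
      ContinuousOn (fun t : ℝ => (1 - (t : ℂ) * (z : ℂ)) ^ w) (Icc (1 / 2 : ℝ) 1) := by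
    intro w
    apply continuousOn_of_forall_continuousAt
    intro x hx
    have hbase : ((1 : ℂ) - (x : ℂ) * (z : ℂ)) ∈ Complex.slitPlane := by
      have : ((1 : ℂ) - (x : ℂ) * (z : ℂ)) = ((1 - x * z : ℝ) : ℂ) := by push_cast; ring
      rw [this]
      exact Complex.ofReal_mem_slitPlane.2 (hxz x hx.1 hx.2)
    have hcta : ContinuousAt (fun t : ℝ => (1 : ℂ) - (t : ℂ) * (z : ℂ)) x :=
      (continuous_const.sub (continuous_ofReal.mul continuous_const)).continuousAt
    exact hcta.cpow continuousAt_const hbase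
  -- the function to integrate by parts
  set F : ℝ → ℂ := fun x =>
    (1 - (x : ℂ)) ^ (s / 2) * (x : ℂ) ^ (s / 2 - 1) * (1 - (x : ℂ) * (z : ℂ)) ^ (-a) with hF
  have hc : ContinuousOn F (Icc (1 / 2 : ℝ) 1) := ((c1.mul (c2 _)).mul (c3 _))
  have hder : ∀ x : ℝ, x ∈ Ioo (1 / 2 : ℝ) 1 → HasDerivAt F
      (-(s / 2) * ((x : ℂ) ^ (s / 2 - 1) * (1 - (x : ℂ)) ^ (s / 2 - 1) *
          (1 - (x : ℂ) * (z : ℂ)) ^ (-a)) +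
        (s / 2 - 1) * ((1 - (x : ℂ)) ^ (s / 2) * (x : ℂ) ^ (s / 2 - 2) *
          (1 - (x : ℂ) * (z : ℂ)) ^ (-a)) +
        a * (z : ℂ) * ((1 - (x : ℂ)) ^ (s / 2) * (x : ℂ) ^ (s / 2 - 1) *
          (1 - (x : ℂ) * (z : ℂ)) ^ (-a - 1))) x := by
    intro x hx
    have hx0 : (0 : ℝ) < x := by linarith [hx.1]
    have U : HasDerivAt (fun y : ℂ => (1 - y) ^ (s / 2))
        (-(s / 2) * (1 - (x : ℂ)) ^ (s / 2 - 1)) ↑x := by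
      have A := @HasDerivAt.cpow_const _ _ _ (s / 2) (hasDerivAt_id (1 - (x : ℂ))) (Or.inl ?_)
      swap
      · rw [id, sub_re, one_re, ofReal_re, sub_pos]; exact hx.2
      simp_rw [id] at A
      have B : HasDerivAt (fun y : ℂ => 1 - y) (-1) ↑x := (hasDerivAt_id _).const_sub 1
      convert HasDerivAt.comp (↑x) A B using 1
      · rfl
      · rfl
      · rfl
      · ring
    have V : HasDerivAt (fun y : ℂ => y ^ (s / 2 - 1))
        ((s / 2 - 1) * (x : ℂ) ^ (s / 2 - 2)) ↑x := by
      have := @HasDerivAt.cpow_const _ _ _ (s / 2 - 1) (hasDerivAt_id (x : ℂ))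
        (Or.inl (by rw [id_eq, ofReal_re]; exact hx0))
      simpa [id_eq, mul_one, show s / 2 - 1 - 1 = s / 2 - 2 by ring] using this
    have W : HasDerivAt (fun y : ℂ => (1 - y * (z : ℂ)) ^ (-a))
        (a * (z : ℂ) * (1 - (x : ℂ) * (z : ℂ)) ^ (-a - 1)) ↑x := by
      have B : HasDerivAt (fun y : ℂ => 1 - y * (z : ℂ)) (-(z : ℂ)) ↑x := by
        simpa using ((hasDerivAt_id ((x : ℝ) : ℂ)).mul_const (z : ℂ)).const_sub 1
      have A := @HasDerivAt.cpow_const _ _ _ (-a) B (Or.inl ?_)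
      swap
      · have : ((1 : ℂ) - (x : ℂ) * (z : ℂ)) = ((1 - x * z : ℝ) : ℂ) := by push_cast; ring
        rw [this, ofReal_re]
        exact hxz x hx.1.le hx.2.le
      convert A using 1
      ring
    convert ((U.mul V).mul W).comp_ofReal using 1
    · rfl
    · simp only [Pi.mul_apply]
      ring
  -- integrability of the three pieces
  have J0 : IntervalIntegrable
      (fun t : ℝ => (t : ℂ) ^ (s / 2 - 1) * (1 - (t : ℂ)) ^ (s / 2 - 1) *
        (1 - (t : ℂ) * (z : ℂ)) ^ (-a)) volume (1 / 2) 1 := by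
    apply IntervalIntegrable.mul_continuousOn
    · refine (Complex.betaIntegral_convergent hs2 hs2).mono_set ?_
      rw [uIcc_of_le hle, uIcc_of_le (by norm_num : (0:ℝ) ≤ 1)]
      exact Icc_subset_Icc (by norm_num) le_rfl
    · rw [uIcc_of_le hle]; exact c3 _
  have J1 : IntervalIntegrable
      (fun t : ℝ => (1 - (t : ℂ)) ^ (s / 2) * (t : ℂ) ^ (s / 2 - 2) *
        (1 - (t : ℂ) * (z : ℂ)) ^ (-a)) volume (1 / 2) 1 := by
    apply ContinuousOn.intervalIntegrable
    rw [uIcc_of_le hle]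
    exact (c1.mul (c2 _)).mul (c3 _)
  have J2 : IntervalIntegrable
      (fun t : ℝ => (1 - (t : ℂ)) ^ (s / 2) * (t : ℂ) ^ (s / 2 - 1) *
        (1 - (t : ℂ) * (z : ℂ)) ^ (-a - 1)) volume (1 / 2) 1 := by
    apply ContinuousOn.intervalIntegrable
    rw [uIcc_of_le hle]
    exact (c1.mul (c2 _)).mul (c3 _)
  have h_int : IntervalIntegrable (fun x : ℝ =>
      -(s / 2) * ((x : ℂ) ^ (s / 2 - 1) * (1 - (x : ℂ)) ^ (s / 2 - 1) *
          (1 - (x : ℂ) * (z : ℂ)) ^ (-a)) +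
        (s / 2 - 1) * ((1 - (x : ℂ)) ^ (s / 2) * (x : ℂ) ^ (s / 2 - 2) *
          (1 - (x : ℂ) * (z : ℂ)) ^ (-a)) +
        a * (z : ℂ) * ((1 - (x : ℂ)) ^ (s / 2) * (x : ℂ) ^ (s / 2 - 1) *
          (1 - (x : ℂ) * (z : ℂ)) ^ (-a - 1))) volume (1 / 2) 1 :=
    ((J0.const_mul _).add (J1.const_mul _)).add (J2.const_mul _)
  have int_ev := intervalIntegral.integral_eq_sub_of_hasDerivAt_of_le hle hc hder h_int
  have hF1 : F 1 = 0 := by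
    simp only [hF, ofReal_one, sub_self, one_cpow]
    rw [Complex.zero_cpow (by
      intro h; rw [h] at hs2; simp at hs2)]
    ring
  have hFhalf : F (1 / 2) = (2 : ℂ) ^ (2 - s) / 2 * (1 - (z : ℂ) / 2) ^ (-a) := by
    have harg : ((2 : ℂ)).arg ≠ Real.pi := by
      rw [show (2 : ℂ) = ((2 : ℝ) : ℂ) by norm_num,
        Complex.arg_ofReal_of_nonneg (by norm_num)]
      exact Ne.symm Real.pi_ne_zero
    have h2 : (2 : ℂ) ^ (2 - s) = 2 * ((2 : ℂ) ^ (s - 1))⁻¹ := by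
      rw [show (2 : ℂ) - s = 1 + (1 - s) by ring, Complex.cpow_add _ _ two_ne_zero,
        Complex.cpow_one, show (1 : ℂ) - s = -(s - 1) by ring, Complex.cpow_neg]
    have h3 : ((1 : ℂ) - ((1 / 2 : ℝ) : ℂ)) = (1 / 2 : ℂ) := by push_cast; ring
    have h4 : (((1 / 2 : ℝ)) : ℂ) = (1 / 2 : ℂ) := by push_cast; ring
    have h5 : ((1 / 2 : ℂ)) ^ (s / 2) * ((1 / 2 : ℂ)) ^ (s / 2 - 1) =
        ((2 : ℂ) ^ (s - 1))⁻¹ := by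
      rw [← Complex.cpow_add _ _ (by norm_num : (1 / 2 : ℂ) ≠ 0),
        show s / 2 + (s / 2 - 1) = s - 1 by ring, show (1 / 2 : ℂ) = (2 : ℂ)⁻¹ by norm_num,
        Complex.inv_cpow _ _ harg]
    have h7 : ((1 : ℂ) - 1 / 2) = 1 / 2 := by norm_num
    simp only [hF, h4, h7]
    rw [h5, h2]
    have h6 : ((1 : ℂ) - (1 / 2 : ℂ) * (z : ℂ)) = 1 - (z : ℂ) / 2 := by ring
    rw [h6]
    ring
  rw [hF1, hFhalf] at int_ev
  rw [intervalIntegral.integral_add ((J0.const_mul _).add (J1.const_mul _)) (J2.const_mul _),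
    intervalIntegral.integral_add (J0.const_mul _) (J1.const_mul _),
    intervalIntegral.integral_const_mul, intervalIntegral.integral_const_mul,
    intervalIntegral.integral_const_mul] at int_ev
  simp only [ofReal_sub, ofReal_one, ofReal_mul, ofReal_div, ofReal_ofNat]
  set I0 := ∫ t in (1 / 2 : ℝ)..1, (t : ℂ) ^ (s / 2 - 1) * (1 - (t : ℂ)) ^ (s / 2 - 1) *
    (1 - (t : ℂ) * (z : ℂ)) ^ (-a) with hI0
  set I1 := ∫ t in (1 / 2 : ℝ)..1, (1 - (t : ℂ)) ^ (s / 2) * (t : ℂ) ^ (s / 2 - 2) *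
    (1 - (t : ℂ) * (z : ℂ)) ^ (-a) with hI1
  set I2 := ∫ t in (1 / 2 : ℝ)..1, (1 - (t : ℂ)) ^ (s / 2) * (t : ℂ) ^ (s / 2 - 1) *
    (1 - (t : ℂ) * (z : ℂ)) ^ (-a - 1) with hI2
  have hss : s * s⁻¹ = 1 := mul_inv_cancel₀ hs0
  linear_combination (-2 * s⁻¹) * int_ev - I0 * hss
end
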